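/- arXiv:1410.1156 — 4 statements merged into one kernel-verified Lean document; each statement's English description precedes it below -/
import Mathlib

section
/- (Schoen's version of the Balog–Szemerédi–Gowers theorem.) There exist absolute constants c > 0 and C > 0 such that the following holds: for every abelian group G, every finite nonempty subset A ⊆ G, and every K ≥ 1, if the additive energy satisfies E⁺(A) ≥ |A|³/K, then there exists a subset A' ⊆ A with |A'| ≥ c·|A|/K and |A' − A'| ≤ C·K⁴·|A'|. -/
open Finset Pointwise

section BSGAux

variable {G : Type} [AddCommGroup G] [DecidableEq G]

/-- The number of representations of `s` as a difference of two elements of `A`,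
equivalently the size of `A ∩ (A + s)`. -/
private def rr (A : Finset G) (s : G) : ℕ := (A.filter fun a => a - s ∈ A).card

private lemma rr_le_card (A : Finset G) (s : G) : rr A s ≤ A.card :=
  card_le_card (filter_subset _ _)

/-- The number of pairs in `A × A` with difference `s` equals `rr A s`. -/
private lemma pair_count (A : Finset G) (s : G) :
    ((A ×ˢ A).filter fun p => p.1 - p.2 = s).card = rr A s := by
  show _ = (A.filter fun a => a - s ∈ A).card
  apply card_nbij' (i := fun p => p.1) (j := fun a => (a, a - s))
  · rintro ⟨a, b⟩ hp
    simp only [mem_coe, mem_filter, mem_product] at hp ⊢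
    obtain ⟨⟨h1, h2⟩, h3⟩ := hp
    refine ⟨h1, ?_⟩
    have : a - s = b := by rw [← h3]; abel
    rwa [this]
  · intro a ha
    simp only [mem_coe, mem_filter, mem_product] at ha ⊢
    exact ⟨⟨ha.1, ha.2⟩, by abel⟩
  · rintro ⟨a, b⟩ hp
    simp only [mem_coe, mem_filter, mem_product] at hp
    have : a - s = b := by rw [← hp.2]; abel
    simp [this]
  · intro a _
    rfl

/-- For `a c ∈ A`, the number of shifts `s` with `a - s ∈ A` and `c - s ∈ A`
equals `rr A (a - c)`. -/
private lemma shift_count (A : Finset G) {a c : G} (ha : a ∈ A) (hc : c ∈ A) :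
    ((A - A).filter fun s => a - s ∈ A ∧ c - s ∈ A).card = rr A (a - c) := by
  show _ = (A.filter fun q => q - (a - c) ∈ A).card
  apply card_nbij' (i := fun s => a - s) (j := fun p => a - p)
  · intro s hs
    simp only [mem_coe, mem_filter] at hs ⊢
    refine ⟨hs.2.1, ?_⟩
    have : a - s - (a - c) = c - s := by abel
    rw [this]; exact hs.2.2
  · intro p hp
    simp only [mem_coe, mem_filter] at hp ⊢
    refine ⟨sub_mem_sub ha hp.1, ?_, ?_⟩
    · rw [sub_sub_cancel]; exact hp.1
    · have : c - (a - p) = p - (a - c) := by abel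
      rw [this]; exact hp.2
  · intro s _; exact sub_sub_cancel a s
  · intro p _; exact sub_sub_cancel a p

/-- Cardinality of a filtered product as a sum of fiber cardinalities. -/
private lemma card_product_filter {α β : Type*} [DecidableEq α] [DecidableEq β]
    (s : Finset α) (t : Finset β) (P : α × β → Prop) [DecidablePred P] :
    ((s ×ˢ t).filter P).card = ∑ a ∈ s, (t.filter fun b => P (a, b)).card := by
  rw [card_eq_sum_card_fiberwise (f := fun p => p.1) (t := s)
      (fun p hp => (mem_product.mp (mem_filter.mp hp).1).1)]
  refine sum_congr rfl fun a ha => ?_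
  apply card_nbij' (i := fun p => p.2) (j := fun b => (a, b))
  · rintro ⟨x, y⟩ hp
    simp only [mem_coe, mem_filter, mem_product] at hp ⊢
    obtain ⟨⟨⟨hx, hy⟩, hP⟩, hxa⟩ := hp
    subst hxa
    exact ⟨hy, hP⟩
  · intro b hb
    have hb' := mem_filter.mp hb
    exact mem_filter.mpr ⟨mem_filter.mpr ⟨mem_product.mpr ⟨ha, hb'.1⟩, hb'.2⟩, rfl⟩
  · rintro ⟨x, y⟩ hp
    simp only [mem_coe, mem_filter, mem_product] at hp
    have : x = a := hp.2
    simp [this]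
  · intro b _
    rfl

/-- The energy of `A` (number of additive quadruples) equals `∑_{s ∈ A-A} (rr A s)^2`. -/
private lemma energy_eq (A : Finset G) :
    ((A ×ˢ A ×ˢ A ×ˢ A).filter fun t => t.1 + t.2.1 = t.2.2.1 + t.2.2.2).card
      = ∑ s ∈ A - A, rr A s ^ 2 := by
  have h1 : ((A ×ˢ A ×ˢ A ×ˢ A).filter fun t => t.1 + t.2.1 = t.2.2.1 + t.2.2.2).card
      = (((A ×ˢ A) ×ˢ (A ×ˢ A)).filter fun p => p.1.1 - p.1.2 = p.2.1 - p.2.2).card := by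
    apply card_nbij' (i := fun t => ((t.1, t.2.2.1), (t.2.2.2, t.2.1)))
      (j := fun p => (p.1.1, (p.2.2, (p.1.2, p.2.1))))
    · rintro ⟨a, b, c, d⟩ ht
      simp only [mem_coe, mem_filter, mem_product] at ht ⊢
      obtain ⟨⟨ha, hb, hc, hd⟩, he⟩ := ht
      refine ⟨⟨⟨ha, hc⟩, hd, hb⟩, ?_⟩
      have : a + b = d + c := by rw [he]; exact add_comm c d
      exact sub_eq_sub_iff_add_eq_add.mpr this
    · rintro ⟨⟨a, c⟩, ⟨d, b⟩⟩ hp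
      simp only [mem_coe, mem_filter, mem_product] at hp ⊢
      obtain ⟨⟨⟨ha, hc⟩, hd, hb⟩, he⟩ := hp
      refine ⟨⟨ha, hb, hc, hd⟩, ?_⟩
      have := sub_eq_sub_iff_add_eq_add.mp he
      rw [this]; exact add_comm d c
    · rintro ⟨a, b, c, d⟩ _; rfl
    · rintro ⟨⟨a, c⟩, ⟨d, b⟩⟩ _; rfl
  rw [h1, card_eq_sum_card_fiberwise (f := fun p => p.1.1 - p.1.2) (t := A - A)
      (by
        rintro ⟨⟨a, c⟩, q⟩ hp
        simp only [mem_coe, mem_filter, mem_product] at hp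
        exact sub_mem_sub hp.1.1.1 hp.1.1.2)]
  refine sum_congr rfl fun s hs => ?_
  have heq : ((((A ×ˢ A) ×ˢ (A ×ˢ A)).filter
        fun p => p.1.1 - p.1.2 = p.2.1 - p.2.2).filter fun p => p.1.1 - p.1.2 = s)
      = ((A ×ˢ A).filter fun q => q.1 - q.2 = s) ×ˢ ((A ×ˢ A).filter fun q => q.1 - q.2 = s) := by
    ext p
    simp only [mem_filter, mem_product]
    constructor
    · rintro ⟨⟨⟨h1, h2⟩, h3⟩, h4⟩
      exact ⟨⟨h1, h4⟩, h2, h3 ▸ h4⟩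
    · rintro ⟨⟨h1, h4⟩, h2, h3⟩
      exact ⟨⟨⟨h1, h2⟩, h4.trans h3.symm⟩, h4⟩
  rw [heq, card_product, pair_count, sq]

/-- The total number of difference representations is `|A|^2`. -/
private lemma sum_rr (A : Finset G) : ∑ s ∈ A - A, rr A s = A.card ^ 2 := by
  calc ∑ s ∈ A - A, rr A s
      = ∑ s ∈ A - A, ((A ×ˢ A).filter fun p => p.1 - p.2 = s).card :=
        sum_congr rfl fun s _ => (pair_count A s).symm
    _ = (A ×ˢ A).card :=
        (card_eq_sum_card_fiberwise fun p hp =>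
          sub_mem_sub (mem_product.mp hp).1 (mem_product.mp hp).2).symm
    _ = A.card ^ 2 := by rw [card_product, sq]

/-- Key double counting: summing the number of "bad" pairs inside `A ∩ (A+s)` over all
shifts `s` equals the sum of `rr A (a-c)` over bad pairs `(a,c) ∈ A × A`. -/
private lemma sum_badcount (A : Finset G) (Bad : G → Prop) [DecidablePred Bad] :
    ∑ s ∈ A - A, (((A.filter fun a => a - s ∈ A) ×ˢ (A.filter fun a => a - s ∈ A)).filter
        fun p => Bad (p.1 - p.2)).card
      = ∑ p ∈ (A ×ˢ A).filter (fun p => Bad (p.1 - p.2)), rr A (p.1 - p.2) := by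
  have hrr : ∀ p : G × G, rr A (p.1 - p.2) = (A.filter fun q => q - (p.1 - p.2) ∈ A).card :=
    fun p => rfl
  simp only [hrr]
  rw [← card_sigma, ← card_sigma]
  apply card_nbij' (i := fun x => ⟨x.2, x.2.1 - x.1⟩) (j := fun y => ⟨y.1.1 - y.2, y.1⟩)
  · rintro ⟨s, a, c⟩ hx
    simp only [mem_coe, mem_sigma, mem_filter, mem_product] at hx ⊢
    obtain ⟨hs, ⟨⟨ha, has⟩, ⟨hc, hcs⟩⟩, hbad⟩ := hx
    refine ⟨⟨⟨ha, hc⟩, hbad⟩, has, ?_⟩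
    have : a - s - (a - c) = c - s := by abel
    rw [this]; exact hcs
  · rintro ⟨⟨a, c⟩, q⟩ hy
    simp only [mem_coe, mem_sigma, mem_filter, mem_product] at hy ⊢
    obtain ⟨⟨⟨ha, hc⟩, hbad⟩, hq, hq2⟩ := hy
    refine ⟨sub_mem_sub ha hq, ⟨⟨ha, ?_⟩, ⟨hc, ?_⟩⟩, hbad⟩
    · rw [sub_sub_cancel]; exact hq
    · have : c - (a - q) = q - (a - c) := by abel
      rw [this]; exact hq2
  · rintro ⟨s, a, c⟩ _
    simp only [sub_sub_cancel]
  · rintro ⟨⟨a, c⟩, q⟩ _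
    simp only [sub_sub_cancel]

end BSGAux

set_option maxHeartbeats 2000000 in
theorem stmt11 :
    ∃ c > (0:ℝ), ∃ C > (0:ℝ),
      ∀ (G : Type) [inst : AddCommGroup G] [instD : DecidableEq G]
        (A : Finset G) (K : ℝ),
        A.Nonempty → 1 ≤ K →
        (A.card : ℝ) ^ 3 / K ≤
          (((A ×ˢ A ×ˢ A ×ˢ A).filter
            fun t => t.1 + t.2.1 = t.2.2.1 + t.2.2.2).card : ℝ) →
        ∃ A' ⊆ A, c * (A.card : ℝ) / K ≤ (A'.card : ℝ) ∧
          ((A' - A').card : ℝ) ≤ C * K ^ 4 * (A'.card : ℝ) := by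
  classical
  refine ⟨1/4, by norm_num, 1048576, by norm_num, ?_⟩
  intro G _ _ A K hA hK hE
  set n : ℝ := (A.card : ℝ) with hn
  have hK0 : (0:ℝ) < K := lt_of_lt_of_le one_pos hK
  have hn1 : (1:ℝ) ≤ n := by
    have := hA.card_pos
    rw [hn]; exact_mod_cast this
  have hn0 : (0:ℝ) < n := lt_of_lt_of_le one_pos hn1
  set θ : ℝ := n / (256 * K) with hθ
  have hθ0 : 0 < θ := by rw [hθ]; positivity
  -- the bad predicate: difference has few representations
  set Bad : G → Prop := fun x => (rr A x : ℝ) < θ with hBadDef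
  -- sums over all shifts
  have hrrsum : ∑ s ∈ A - A, (rr A s : ℝ) = n ^ 2 := by
    rw [hn]; exact_mod_cast sum_rr A
  have hEsum : n ^ 3 / K ≤ ∑ s ∈ A - A, (rr A s : ℝ) ^ 2 := by
    refine hE.trans (le_of_eq ?_)
    exact_mod_cast energy_eq A
  -- the bad-pair count for each shift
  set bc : G → ℕ := fun s =>
    (((A.filter fun a => a - s ∈ A) ×ˢ (A.filter fun a => a - s ∈ A)).filter
      fun p => Bad (p.1 - p.2)).card with hbcDef
  have hbcsum : ∑ s ∈ A - A, (bc s : ℝ) ≤ n ^ 2 * θ := by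
    have h1 : ∑ s ∈ A - A, bc s
        = ∑ p ∈ (A ×ˢ A).filter (fun p => Bad (p.1 - p.2)), rr A (p.1 - p.2) :=
      sum_badcount A Bad
    have h2 : ∑ s ∈ A - A, (bc s : ℝ)
        = ∑ p ∈ (A ×ˢ A).filter (fun p => Bad (p.1 - p.2)), (rr A (p.1 - p.2) : ℝ) := by
      exact_mod_cast h1
    rw [h2]
    calc ∑ p ∈ (A ×ˢ A).filter (fun p => Bad (p.1 - p.2)), (rr A (p.1 - p.2) : ℝ)
        ≤ ∑ _p ∈ (A ×ˢ A).filter (fun p => Bad (p.1 - p.2)), θ := by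
          refine sum_le_sum fun p hp => ?_
          have hb := (mem_filter.mp hp).2
          rw [hBadDef] at hb
          exact hb.le
      _ = (((A ×ˢ A).filter (fun p => Bad (p.1 - p.2))).card : ℝ) * θ := by
          rw [sum_const, nsmul_eq_mul]
      _ ≤ n ^ 2 * θ := by
          refine mul_le_mul_of_nonneg_right ?_ hθ0.le
          have : ((A ×ˢ A).filter (fun p => Bad (p.1 - p.2))).card ≤ A.card ^ 2 := by
            calc ((A ×ˢ A).filter (fun p => Bad (p.1 - p.2))).card
                ≤ (A ×ˢ A).card := card_le_card (filter_subset _ _)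
              _ = A.card ^ 2 := by rw [card_product, sq]
          rw [hn]; exact_mod_cast this
  -- select a good shift
  have hsel : ∃ s ∈ A - A,
      (0:ℝ) < (rr A s : ℝ) ^ 2 - 64 * (bc s : ℝ) - n / (2 * K) * (rr A s : ℝ) := by
    have hlt : ∑ _s ∈ A - A, (0:ℝ)
        < ∑ s ∈ A - A, ((rr A s : ℝ) ^ 2 - 64 * (bc s : ℝ) - n / (2 * K) * (rr A s : ℝ)) := by
      rw [Finset.sum_const, smul_zero]
      rw [Finset.sum_sub_distrib, Finset.sum_sub_distrib, ← Finset.mul_sum, ← Finset.mul_sum,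
        hrrsum]
      have e1 : n ^ 3 / K - 64 * (n ^ 2 * θ) - n / (2 * K) * n ^ 2 = n ^ 3 / (4 * K) := by
        rw [hθ]; field_simp; ring
      have e2 : (0:ℝ) < n ^ 3 / (4 * K) := by positivity
      have e3 : 64 * (∑ s ∈ A - A, (bc s : ℝ)) ≤ 64 * (n ^ 2 * θ) := by
        nlinarith [hbcsum]
      nlinarith [hEsum]
    obtain ⟨s, hs, h⟩ := exists_lt_of_sum_lt hlt
    exact ⟨s, hs, h⟩
  obtain ⟨s₀, hs₀mem, hs₀⟩ := hsel
  set S : Finset G := A.filter fun a => a - s₀ ∈ A with hSdef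
  have hSA : S ⊆ A := filter_subset _ _
  set m : ℝ := (S.card : ℝ) with hm
  have hmrr : (rr A s₀ : ℝ) = m := rfl
  rw [hmrr] at hs₀
  have hbc0 : (0:ℝ) ≤ (bc s₀ : ℝ) := Nat.cast_nonneg _
  have hmge : (0:ℝ) ≤ m := by rw [hm]; exact Nat.cast_nonneg _
  have hnk : (0:ℝ) < n / (2 * K) := by positivity
  have hm0 : 0 < m := by nlinarith [hs₀, hbc0, hmge, hnk]
  have hmn : n / (2 * K) < m := by nlinarith [hs₀, hbc0, hm0]
  have hbcm : 64 * (bc s₀ : ℝ) < m ^ 2 := by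
    have : 0 < n / (2 * K) * m := by positivity
    nlinarith
  have hmlen : m ≤ n := by
    rw [hm, hn]; exact_mod_cast card_le_card hSA
  -- bad degree within S
  set bd : G → ℕ := fun a => (S.filter fun c => Bad (a - c)).card with hbdDef
  have hbd_sum : ∑ a ∈ S, bd a = bc s₀ := by
    rw [hbcDef, hbdDef]
    exact (card_product_filter S S (fun p => Bad (p.1 - p.2))).symm
  -- the cleaned set
  set A' : Finset G := S.filter fun a => (bd a : ℝ) ≤ m / 8 with hA'def
  have hA'S : A' ⊆ S := filter_subset _ _
  have hA'A : A' ⊆ A := hA'S.trans hSA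
  have hA'card : 7 / 8 * m ≤ (A'.card : ℝ) := by
    set Bd : Finset G := S.filter (fun a => ¬ ((bd a : ℝ) ≤ m / 8)) with hBddef
    have hsplit : A'.card + Bd.card = S.card := by
      rw [hA'def, hBddef]
      exact card_filter_add_card_filter_not _
    have hBdbound : (Bd.card : ℝ) * (m / 8) ≤ (bc s₀ : ℝ) := by
      have h1 : ∀ a ∈ Bd, m / 8 ≤ (bd a : ℝ) := by
        intro a ha
        have := (mem_filter.mp ha).2
        exact (not_le.mp this).le
      have h2 : (Bd.card : ℝ) * (m / 8) ≤ ∑ a ∈ Bd, (bd a : ℝ) := by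
        have := card_nsmul_le_sum Bd (fun a => (bd a : ℝ)) (m / 8) h1
        rwa [nsmul_eq_mul] at this
      have h3 : ∑ a ∈ Bd, (bd a : ℝ) ≤ ∑ a ∈ S, (bd a : ℝ) := by
        refine sum_le_sum_of_subset_of_nonneg (filter_subset _ _) ?_
        intro i _ _; exact Nat.cast_nonneg _
      have h4 : ∑ a ∈ S, (bd a : ℝ) = (bc s₀ : ℝ) := by exact_mod_cast hbd_sum
      linarith
    have hBdlt : (Bd.card : ℝ) < m / 8 := by
      by_contra hcon
      push_neg at hcon
      have : m / 8 * (m / 8) ≤ (Bd.card : ℝ) * (m / 8) :=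
        mul_le_mul_of_nonneg_right hcon (by nlinarith [hm0])
      nlinarith
    have hcards : (A'.card : ℝ) + (Bd.card : ℝ) = m := by
      rw [hm]; exact_mod_cast hsplit
    linarith
  refine ⟨A', hA'A, ?_, ?_⟩
  · -- size bound
    have : 1 / 4 * n / K = 1 / 2 * (n / (2 * K)) := by ring
    rw [this]
    have h1 : 0 ≤ n / (2 * K) := by positivity
    nlinarith
  · -- difference set bound
    set T : Finset (G × G) := (A - A) ×ˢ (A - A) with hTdef
    set g : G × G → ℝ := fun p => (rr A p.1 : ℝ) * (rr A p.2 : ℝ) with hgdef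
    have hgnonneg : ∀ p, 0 ≤ g p := fun p =>
      mul_nonneg (Nat.cast_nonneg _) (Nat.cast_nonneg _)
    have htot : ∑ p ∈ T, g p = n ^ 4 := by
      rw [hTdef, Finset.sum_product]
      have : ∀ u ∈ A - A, ∑ v ∈ A - A, g (u, v) = (rr A u : ℝ) * n ^ 2 := by
        intro u _
        rw [hgdef]
        simp only
        rw [← Finset.mul_sum, hrrsum]
      rw [sum_congr rfl this, ← Finset.sum_mul, hrrsum]
      ring
    -- lower bound for each fiber
    have hfib : ∀ d ∈ A' - A',
        3 / 4 * m * θ ^ 2 ≤ ∑ p ∈ T.filter (fun p => p.1 - p.2 = d), g p := by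
      intro d hd
      rw [mem_sub] at hd
      obtain ⟨a, ha', b, hb', rfl⟩ := hd
      have haA : a ∈ A := hA'A ha'
      have hbA : b ∈ A := hA'A hb'
      set Gab : Finset G := S.filter (fun c => ¬ Bad (a - c) ∧ ¬ Bad (b - c)) with hGabdef
      -- Gab is large
      have hGabcard : 3 / 4 * m ≤ (Gab.card : ℝ) := by
        have hsub : S ⊆ Gab ∪ (S.filter fun c => Bad (a - c)) ∪ (S.filter fun c => Bad (b - c)) := by
          intro c hc
          by_cases h1 : Bad (a - c)
          · exact mem_union_left _ (mem_union_right _ (mem_filter.mpr ⟨hc, h1⟩))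
          · by_cases h2 : Bad (b - c)
            · exact mem_union_right _ (mem_filter.mpr ⟨hc, h2⟩)
            · exact mem_union_left _ (mem_union_left _ (mem_filter.mpr ⟨hc, h1, h2⟩))
        have hcard : S.card ≤ Gab.card + bd a + bd b := by
          calc S.card ≤ (Gab ∪ (S.filter fun c => Bad (a - c))
                ∪ (S.filter fun c => Bad (b - c))).card := card_le_card hsub
            _ ≤ (Gab ∪ (S.filter fun c => Bad (a - c))).card
                + (S.filter fun c => Bad (b - c)).card := card_union_le _ _
            _ ≤ Gab.card + (S.filter fun c => Bad (a - c)).card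
                + (S.filter fun c => Bad (b - c)).card := by
                  have := card_union_le Gab (S.filter fun c => Bad (a - c))
                  omega
            _ = Gab.card + bd a + bd b := rfl
        have hbda : (bd a : ℝ) ≤ m / 8 := (mem_filter.mp ha').2
        have hbdb : (bd b : ℝ) ≤ m / 8 := (mem_filter.mp hb').2
        have hcardR : m ≤ (Gab.card : ℝ) + (bd a : ℝ) + (bd b : ℝ) := by
          rw [hm]; exact_mod_cast hcard
        linarith
      -- inject Gab into the fiber
      set φ : G → G × G := fun c => (a - c, b - c) with hφdef
      have hinj : Set.InjOn φ Gab := by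
        intro c1 _ c2 _ h
        have : a - c1 = a - c2 := congrArg Prod.fst h
        exact sub_right_injective this
      have himg : Gab.image φ ⊆ T.filter (fun p => p.1 - p.2 = a - b) := by
        intro p hp
        rw [mem_image] at hp
        obtain ⟨c, hc, rfl⟩ := hp
        have hcS : c ∈ S := (mem_filter.mp hc).1
        have hcA : c ∈ A := hSA hcS
        refine mem_filter.mpr ⟨?_, ?_⟩
        · rw [hTdef]
          exact mem_product.mpr ⟨sub_mem_sub haA hcA, sub_mem_sub hbA hcA⟩
        · show a - c - (b - c) = a - b
          abel
      have himgcard : (Gab.image φ).card = Gab.card := card_image_of_injOn hinj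
      have hbound : ∀ p ∈ Gab.image φ, θ ^ 2 ≤ g p := by
        intro p hp
        rw [mem_image] at hp
        obtain ⟨c, hc, rfl⟩ := hp
        have h1 : ¬ Bad (a - c) := (mem_filter.mp hc).2.1
        have h2 : ¬ Bad (b - c) := (mem_filter.mp hc).2.2
        simp only [hBadDef, not_lt] at h1 h2
        have hgval : g (φ c) = (rr A (a - c) : ℝ) * (rr A (b - c) : ℝ) := rfl
        rw [hgval, sq]
        exact mul_le_mul h1 h2 hθ0.le (Nat.cast_nonneg _)
      calc 3 / 4 * m * θ ^ 2 ≤ (Gab.card : ℝ) * θ ^ 2 :=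
            mul_le_mul_of_nonneg_right hGabcard (sq_nonneg θ)
        _ = ((Gab.image φ).card : ℝ) * θ ^ 2 := by rw [himgcard]
        _ ≤ ∑ p ∈ Gab.image φ, g p := by
            have := card_nsmul_le_sum (Gab.image φ) g (θ ^ 2) hbound
            rwa [nsmul_eq_mul] at this
        _ ≤ ∑ p ∈ T.filter (fun p => p.1 - p.2 = a - b), g p :=
            sum_le_sum_of_subset_of_nonneg himg (fun p _ _ => hgnonneg p)
    -- main count
    have hcount : ((A' - A').card : ℝ) * (3 / 4 * m * θ ^ 2) ≤ n ^ 4 := by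
      have h1 : ((A' - A').card : ℝ) * (3 / 4 * m * θ ^ 2)
          ≤ ∑ d ∈ A' - A', ∑ p ∈ T.filter (fun p => p.1 - p.2 = d), g p := by
        have := card_nsmul_le_sum (A' - A')
          (fun d => ∑ p ∈ T.filter (fun p => p.1 - p.2 = d), g p) (3 / 4 * m * θ ^ 2) hfib
        rwa [nsmul_eq_mul] at this
      have h2 : ∑ d ∈ A' - A', ∑ p ∈ T.filter (fun p => p.1 - p.2 = d), g p
          = ∑ p ∈ T.filter (fun p => p.1 - p.2 ∈ A' - A'), g p := by
        rw [← sum_fiberwise_of_maps_to (g := fun p : G × G => p.1 - p.2)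
          (t := A' - A') (fun p hp => (mem_filter.mp hp).2) g]
        refine sum_congr rfl fun d hd => ?_
        refine sum_congr ?_ fun _ _ => rfl
        rw [filter_filter]
        ext p
        simp only [mem_filter]
        constructor
        · rintro ⟨hT, hdiff⟩
          exact ⟨hT, hdiff ▸ hd, hdiff⟩
        · rintro ⟨hT, _, hdiff⟩
          exact ⟨hT, hdiff⟩
      have h3 : ∑ p ∈ T.filter (fun p => p.1 - p.2 ∈ A' - A'), g p ≤ ∑ p ∈ T, g p :=
        sum_le_sum_of_subset_of_nonneg (filter_subset _ _) (fun p _ _ => hgnonneg p)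
      rw [htot] at h3
      linarith
    -- final algebra
    have hD0 : (0:ℝ) ≤ ((A' - A').card : ℝ) := Nat.cast_nonneg _
    set D : ℝ := ((A' - A').card : ℝ) with hDdef
    have hA'0 : (0:ℝ) < (A'.card : ℝ) := by nlinarith
    have hstep1 : D * (3 / 4 * (n / (2 * K)) * θ ^ 2) ≤ n ^ 4 := by
      have : D * (3 / 4 * (n / (2 * K)) * θ ^ 2) ≤ D * (3 / 4 * m * θ ^ 2) := by
        refine mul_le_mul_of_nonneg_left ?_ hD0
        have := sq_nonneg θ
        nlinarith
      linarith
    have hθval : 3 / 4 * (n / (2 * K)) * θ ^ 2 = 3 * n ^ 3 / (524288 * K ^ 3) := by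
      rw [hθ]; field_simp; ring
    rw [hθval] at hstep1
    have hstep2 : D * (3 * n ^ 3) ≤ n ^ 4 * (524288 * K ^ 3) := by
      have hpos : (0:ℝ) < 524288 * K ^ 3 := by positivity
      have e : D * (3 * n ^ 3 / (524288 * K ^ 3)) = D * (3 * n ^ 3) / (524288 * K ^ 3) := by
        ring
      rw [e] at hstep1
      exact (div_le_iff₀ hpos).mp hstep1
    have hsize : n ≤ 16 / 7 * (K * (A'.card : ℝ)) := by
      have h1 : n < 2 * K * m := by
        rw [div_lt_iff₀ (by positivity : (0:ℝ) < 2 * K)] at hmn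
        linarith [hmn]
      nlinarith
    -- conclude
    have h3n : (0:ℝ) < 3 * n ^ 3 := by positivity
    rw [← mul_le_mul_iff_right₀ h3n]
    calc 3 * n ^ 3 * D = D * (3 * n ^ 3) := by ring
      _ ≤ n ^ 4 * (524288 * K ^ 3) := hstep2
      _ = n ^ 3 * (524288 * K ^ 3) * n := by ring
      _ ≤ n ^ 3 * (524288 * K ^ 3) * (16 / 7 * (K * (A'.card : ℝ))) := by
          refine mul_le_mul_of_nonneg_left hsize ?_
          positivity
      _ ≤ 3 * n ^ 3 * (1048576 * K ^ 4 * (A'.card : ℝ)) := by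
          have hx : (0:ℝ) ≤ n ^ 3 * (K ^ 3 * (K * (A'.card : ℝ))) :=
            mul_nonneg (pow_nonneg hn0.le 3)
              (mul_nonneg (pow_nonneg hK0.le 3) (mul_nonneg hK0.le hA'0.le))
          nlinarith [hx]
end

section
/- There exists an absolute constant c > 0 such that the following holds: for all finite sets A, B, C of real numbers with A ≠ {0}, A nonempty, and B+C nonempty and not equal to {0}, one has |A(B+C)| ≥ c·(|A|·|B|·|C|)^{1/2}. -/
set_option maxHeartbeats 1000000
open Finset Pointwise

namespace Stmt13


/-- ordered inversion count of a finite set of points in the plane -/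
noncomputable def Xc (E : Finset (ℝ × ℝ)) : ℕ :=
  ((E ×ˢ E).filter (fun q => (q.1.1 - q.2.1) * (q.1.2 - q.2.2) < 0)).card

lemma chain_bound (R T : Finset ℝ) (E : Finset (ℝ × ℝ)) (hE : E ⊆ R ×ˢ T)
    (h0 : Xc E = 0) : E.card ≤ R.card + T.card := by
  classical
  have hemp := Finset.card_eq_zero.mp h0
  have hno : ∀ e ∈ E, ∀ f ∈ E, 0 ≤ (e.1 - f.1) * (e.2 - f.2) := by
    intro e he f hf
    by_contra hlt
    push_neg at hlt
    have : (e, f) ∈ (E ×ˢ E).filter (fun q => (q.1.1 - q.2.1) * (q.1.2 - q.2.2) < 0) := by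
      simp [Finset.mem_filter, Finset.mem_product, he, hf, hlt]
    rw [hemp] at this
    exact absurd this (Finset.notMem_empty _)
  set rk : ℝ × ℝ → ℕ := fun e => (R.filter (· < e.1)).card + (T.filter (· < e.2)).card with hrk
  have key : ∀ a b : ℝ × ℝ, a ∈ E → b ∈ E → a ≠ b → a.1 ≤ b.1 → a.2 ≤ b.2 → rk a < rk b := by
    intro a b ha hb hab h1 h2
    have haR : a.1 ∈ R := (Finset.mem_product.1 (hE ha)).1
    have haT : a.2 ∈ T := (Finset.mem_product.1 (hE ha)).2
    have hmono1 : (R.filter (· < a.1)).card ≤ (R.filter (· < b.1)).card :=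
      Finset.card_le_card (Finset.monotone_filter_right R (fun x _ hx => lt_of_lt_of_le hx h1))
    have hmono2 : (T.filter (· < a.2)).card ≤ (T.filter (· < b.2)).card :=
      Finset.card_le_card (Finset.monotone_filter_right T (fun x _ hx => lt_of_lt_of_le hx h2))
    rcases lt_or_eq_of_le h1 with h1' | h1'
    · have : (R.filter (· < a.1)).card < (R.filter (· < b.1)).card := by
        apply Finset.card_lt_card
        refine ⟨Finset.monotone_filter_right R (fun x _ hx => lt_trans hx h1'), ?_⟩
        intro hsub
        have : a.1 ∈ R.filter (· < a.1) := hsub (by simp [haR, h1'])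
        simp at this
      simp only [hrk]; omega
    · rcases lt_or_eq_of_le h2 with h2' | h2'
      · have : (T.filter (· < a.2)).card < (T.filter (· < b.2)).card := by
          apply Finset.card_lt_card
          refine ⟨Finset.monotone_filter_right T (fun x _ hx => lt_trans hx h2'), ?_⟩
          intro hsub
          have : a.2 ∈ T.filter (· < a.2) := hsub (by simp [haT, h2'])
          simp at this
        simp only [hrk]; omega
      · exact absurd (Prod.ext h1' h2') hab
  have hinj : Set.InjOn rk E := by
    intro e he f hf heq
    by_contra hne
    have hcmp : (e.1 ≤ f.1 ∧ e.2 ≤ f.2) ∨ (f.1 ≤ e.1 ∧ f.2 ≤ e.2) := by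
      rcases mul_nonneg_iff.mp (hno e he f hf) with ⟨h1, h2⟩ | ⟨h1, h2⟩
      · exact Or.inr ⟨by linarith, by linarith⟩
      · exact Or.inl ⟨by linarith, by linarith⟩
    rcases hcmp with ⟨h1, h2⟩ | ⟨h1, h2⟩
    · exact absurd heq (Nat.ne_of_lt (key e f he hf hne h1 h2))
    · exact absurd heq.symm (Nat.ne_of_lt (key f e hf he (Ne.symm hne) h1 h2))
  -- rank values are < R.card + T.card
  calc E.card = (E.image rk).card := (Finset.card_image_of_injOn hinj).symm
    _ ≤ (Finset.range (R.card + T.card)).card := by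
        apply Finset.card_le_card
        intro n hn
        rcases Finset.mem_image.1 hn with ⟨e, he, rfl⟩
        have heR : e.1 ∈ R := (Finset.mem_product.1 (hE he)).1
        have heT : e.2 ∈ T := (Finset.mem_product.1 (hE he)).2
        have h1 : (R.filter (· < e.1)).card < R.card := by
          apply Finset.card_lt_card
          refine ⟨Finset.filter_subset _ _, ?_⟩
          intro hsub
          have : e.1 ∈ R.filter (· < e.1) := hsub heR
          simp at this
        have h2 : (T.filter (· < e.2)).card < T.card := by
          apply Finset.card_lt_card
          refine ⟨Finset.filter_subset _ _, ?_⟩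
          intro hsub
          have : e.2 ∈ T.filter (· < e.2) := hsub heT
          simp at this
        simp only [Finset.mem_range, hrk]
        omega
    _ = R.card + T.card := Finset.card_range _

lemma weak_bound (R T : Finset ℝ) : ∀ (E : Finset (ℝ × ℝ)), E ⊆ R ×ˢ T →
    2 * E.card ≤ Xc E + 2 * (R.card + T.card) := by
  classical
  intro E
  induction E using Finset.strongInduction with
  | _ E ih =>
    intro hE
    by_cases h0 : Xc E = 0
    · have := chain_bound R T E hE h0
      omega
    · -- pick an inversion pair
      have hne : ((E ×ˢ E).filter (fun q => (q.1.1 - q.2.1) * (q.1.2 - q.2.2) < 0)).Nonempty := by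
        rw [Finset.nonempty_iff_ne_empty]
        intro h; exact h0 (by simp [Xc, h])
      obtain ⟨q, hq⟩ := hne
      obtain ⟨hqmem, hqinv⟩ := Finset.mem_filter.1 hq
      obtain ⟨hq1, hq2⟩ := Finset.mem_product.1 hqmem
      set e := q.1 with he'
      set f := q.2 with hf'
      have hef : e ≠ f := by
        intro h
        rw [h] at hqinv
        simp at hqinv
      have hE' : E.erase e ⊂ E := Finset.erase_ssubset hq1
      have ih' := ih (E.erase e) hE' ((Finset.erase_subset _ _).trans hE)
      -- Xc (E.erase e) + 2 ≤ Xc E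
      have hXc : Xc (E.erase e) + 2 ≤ Xc E := by
        have hsub : insert (e, f) (insert (f, e)
            (((E.erase e) ×ˢ (E.erase e)).filter (fun q => (q.1.1 - q.2.1) * (q.1.2 - q.2.2) < 0)))
            ⊆ (E ×ˢ E).filter (fun q => (q.1.1 - q.2.1) * (q.1.2 - q.2.2) < 0) := by
          intro x hx
          simp only [Finset.mem_insert] at hx
          rcases hx with rfl | rfl | hx
          · exact Finset.mem_filter.2 ⟨Finset.mem_product.2 ⟨hq1, hq2⟩, hqinv⟩
          · refine Finset.mem_filter.2 ⟨Finset.mem_product.2 ⟨hq2, hq1⟩, ?_⟩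
            have : (f.1 - e.1) * (f.2 - e.2) = (e.1 - f.1) * (e.2 - f.2) := by ring
            simpa [this] using hqinv
          · obtain ⟨hxmem, hxinv⟩ := Finset.mem_filter.1 hx
            obtain ⟨hx1, hx2⟩ := Finset.mem_product.1 hxmem
            exact Finset.mem_filter.2 ⟨Finset.mem_product.2
              ⟨Finset.mem_of_mem_erase hx1, Finset.mem_of_mem_erase hx2⟩, hxinv⟩
        have hcard := Finset.card_le_card hsub
        have hef1 : (e, f) ∉ (insert (f, e)
            (((E.erase e) ×ˢ (E.erase e)).filter (fun q => (q.1.1 - q.2.1) * (q.1.2 - q.2.2) < 0))) := by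
          simp only [Finset.mem_insert, Finset.mem_filter, Finset.mem_product]
          push_neg
          refine ⟨?_, ?_⟩
          · intro h
            have h1 : e = f := congrArg Prod.fst h
            have h2 : f = e := congrArg Prod.snd h
            exact hef h1
          · intro h
            exact absurd (Finset.mem_erase.1 h.1).1 (by simp)
        have hfe1 : (f, e) ∉ (((E.erase e) ×ˢ (E.erase e)).filter
            (fun q => (q.1.1 - q.2.1) * (q.1.2 - q.2.2) < 0)) := by
          simp only [Finset.mem_filter, Finset.mem_product]
          push_neg
          intro h
          exact absurd (Finset.mem_erase.1 h.2).1 (by simp)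
        rw [Finset.card_insert_of_notMem hef1, Finset.card_insert_of_notMem hfe1] at hcard
        simpa [Xc] using by omega
      have hcarde : E.card = (E.erase e).card + 1 := by
        rw [Finset.card_erase_of_mem hq1]
        have : 0 < E.card := Finset.card_pos.2 ⟨e, hq1⟩
        omega
      omega



lemma expect_subset (P : Finset ℝ) (p : ℝ) (s : Finset ℝ) (hs : s ⊆ P) :
    ∑ t ∈ P.powerset, p ^ t.card * (1 - p) ^ (P.card - t.card) * (if s ⊆ t then (1:ℝ) else 0)
      = p ^ s.card := by
  classical
  have key := Finset.prod_add (fun _ : ℝ => p) (fun i => if i ∈ s then (0:ℝ) else (1 - p)) P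
  have lhs : ∏ i ∈ P, ((fun _ : ℝ => p) i + (fun i => if i ∈ s then (0:ℝ) else (1 - p)) i)
      = p ^ s.card := by
    have : ∀ i ∈ P, ((fun _ : ℝ => p) i + (fun i => if i ∈ s then (0:ℝ) else (1 - p)) i)
        = (if i ∈ s then p else 1) := by
      intro i _
      by_cases h : i ∈ s <;> simp [h]
    rw [Finset.prod_congr rfl this, Finset.prod_ite_mem,
      Finset.inter_eq_right.mpr hs, Finset.prod_const]
  rw [lhs] at key
  rw [key]
  apply Finset.sum_congr rfl
  intro t ht
  have htP : t ⊆ P := Finset.mem_powerset.1 ht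
  by_cases hst : s ⊆ t
  · have hall : ∀ i ∈ P \ t, ((fun i => if i ∈ s then (0:ℝ) else (1 - p)) i) = (1 - p) := by
      intro i hi
      have : i ∉ s := fun h => (Finset.mem_sdiff.1 hi).2 (hst h)
      simp [this]
    rw [Finset.prod_congr rfl hall, Finset.prod_const, Finset.prod_const,
      Finset.card_sdiff_of_subset htP]
    simp [hst]
  · obtain ⟨i, his, hit⟩ := Finset.not_subset.1 hst
    have hiPt : i ∈ P \ t := Finset.mem_sdiff.2 ⟨hs his, hit⟩
    rw [Finset.prod_eq_zero hiPt (by simp [his])]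
    simp [hst]

lemma double_expect (P : Finset ℝ) (p : ℝ) {ι : Type*} [DecidableEq ι] (Q : Finset ι)
    (a b : ι → Finset ℝ) (ha : ∀ q ∈ Q, a q ⊆ P) (hb : ∀ q ∈ Q, b q ⊆ P) :
    ∑ R ∈ P.powerset, ∑ T ∈ P.powerset,
      ((p ^ R.card * (1 - p) ^ (P.card - R.card)) * (p ^ T.card * (1 - p) ^ (P.card - T.card))) *
      (∑ q ∈ Q, (if a q ⊆ R then (1:ℝ) else 0) * (if b q ⊆ T then (1:ℝ) else 0))
    = ∑ q ∈ Q, p ^ (a q).card * p ^ (b q).card := by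
  classical
  set w : Finset ℝ → ℝ := fun R => p ^ R.card * (1 - p) ^ (P.card - R.card) with hw
  have step : ∀ R ∈ P.powerset, ∀ T ∈ P.powerset,
      (w R * w T) * (∑ q ∈ Q, (if a q ⊆ R then (1:ℝ) else 0) * (if b q ⊆ T then (1:ℝ) else 0))
      = ∑ q ∈ Q, (w R * (if a q ⊆ R then (1:ℝ) else 0)) * (w T * (if b q ⊆ T then (1:ℝ) else 0)) := by
    intro R _ T _
    rw [Finset.mul_sum]
    apply Finset.sum_congr rfl
    intro q _
    ring
  rw [Finset.sum_congr rfl (fun R hR => Finset.sum_congr rfl (fun T hT => step R hR T hT))]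
  rw [Finset.sum_congr rfl (fun R (hR : R ∈ P.powerset) => Finset.sum_comm)]
  rw [Finset.sum_comm]
  apply Finset.sum_congr rfl
  intro q hq
  have h1 : ∑ R ∈ P.powerset, ∑ T ∈ P.powerset,
      (w R * (if a q ⊆ R then (1:ℝ) else 0)) * (w T * (if b q ⊆ T then (1:ℝ) else 0))
      = (∑ R ∈ P.powerset, w R * (if a q ⊆ R then (1:ℝ) else 0)) *
        (∑ T ∈ P.powerset, w T * (if b q ⊆ T then (1:ℝ) else 0)) := by
    rw [Finset.sum_mul_sum]
  rw [h1, expect_subset P p (a q) (ha q hq), expect_subset P p (b q) (hb q hq)]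

lemma crossing_lemma (P : Finset ℝ) (E : Finset (ℝ × ℝ)) (hE : E ⊆ P ×ˢ P)
    (hm : 8 * P.card ≤ E.card) :
    (E.card : ℝ) ^ 3 ≤ 16 * (P.card : ℝ) ^ 2 * (Xc E : ℝ) := by
  classical
  rcases Nat.eq_zero_or_pos P.card with hN0 | hNpos
  · have : E = ∅ := by
      rw [Finset.card_eq_zero] at hN0
      rw [Finset.eq_empty_iff_forall_notMem]
      intro e he
      have := hE he
      simp [hN0] at this
    simp [this, Xc]
  have hmpos : 0 < E.card := by omega
  set N : ℝ := (P.card : ℝ) with hNdef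
  set m : ℝ := (E.card : ℝ) with hmdef
  have hN : (0:ℝ) < N := by rw [hNdef]; exact_mod_cast hNpos
  have hm' : (0:ℝ) < m := by rw [hmdef]; exact_mod_cast hmpos
  have h8 : 8 * N ≤ m := by rw [hNdef, hmdef]; exact_mod_cast hm
  set p : ℝ := 4 * N / m with hp
  have hp0 : 0 < p := by positivity
  have hp1 : p ≤ 1 := by
    rw [hp, div_le_one hm']
    linarith
  set w : Finset ℝ → ℝ := fun R => p ^ R.card * (1 - p) ^ (P.card - R.card) with hw
  have hw0 : ∀ R, 0 ≤ w R := by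
    intro R
    have : (0:ℝ) ≤ 1 - p := by linarith
    positivity
  set F := (E ×ˢ E).filter (fun q => (q.1.1 - q.2.1) * (q.1.2 - q.2.2) < 0) with hF
  -- per-pair identities
  have hXid : ∀ R T : Finset ℝ, ((Xc (E ∩ R ×ˢ T) : ℝ))
      = ∑ q ∈ F, (if ({q.1.1, q.2.1} : Finset ℝ) ⊆ R then (1:ℝ) else 0) *
                 (if ({q.1.2, q.2.2} : Finset ℝ) ⊆ T then (1:ℝ) else 0) := by
    intro R T
    have hset : ((E ∩ R ×ˢ T) ×ˢ (E ∩ R ×ˢ T)).filter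
        (fun q => (q.1.1 - q.2.1) * (q.1.2 - q.2.2) < 0)
        = F.filter (fun q => ({q.1.1, q.2.1} : Finset ℝ) ⊆ R ∧ ({q.1.2, q.2.2} : Finset ℝ) ⊆ T) := by
      ext q
      simp only [Finset.mem_filter, Finset.mem_product, Finset.mem_inter, hF,
        Finset.insert_subset_iff, Finset.singleton_subset_iff]
      tauto
    rw [Xc, hset, Finset.card_filter]
    push_cast
    apply Finset.sum_congr rfl
    intro q _
    by_cases h1 : ({q.1.1, q.2.1} : Finset ℝ) ⊆ R <;>
      by_cases h2 : ({q.1.2, q.2.2} : Finset ℝ) ⊆ T <;> simp [h1, h2]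
  have hCid : ∀ R T : Finset ℝ, (((E ∩ R ×ˢ T).card : ℝ))
      = ∑ e ∈ E, (if ({e.1} : Finset ℝ) ⊆ R then (1:ℝ) else 0) *
                 (if ({e.2} : Finset ℝ) ⊆ T then (1:ℝ) else 0) := by
    intro R T
    have hset : E ∩ R ×ˢ T = E.filter (fun e => ({e.1} : Finset ℝ) ⊆ R ∧ ({e.2} : Finset ℝ) ⊆ T) := by
      ext e
      simp only [Finset.mem_inter, Finset.mem_filter, Finset.mem_product,
        Finset.singleton_subset_iff]
    rw [hset, Finset.card_filter]
    push_cast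
    apply Finset.sum_congr rfl
    intro e _
    by_cases h1 : ({e.1} : Finset ℝ) ⊆ R <;>
      by_cases h2 : ({e.2} : Finset ℝ) ⊆ T <;> simp [h1, h2]
  have hRid : ∀ R ∈ P.powerset, ∀ T : Finset ℝ, ((R.card : ℝ))
      = ∑ x ∈ P, (if ({x} : Finset ℝ) ⊆ R then (1:ℝ) else 0) *
                 (if (∅ : Finset ℝ) ⊆ T then (1:ℝ) else 0) := by
    intro R hR T
    have hRP : R ⊆ P := Finset.mem_powerset.1 hR
    have : R = P.filter (fun x => ({x} : Finset ℝ) ⊆ R) := by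
      ext x
      simp only [Finset.mem_filter, Finset.singleton_subset_iff]
      exact ⟨fun h => ⟨hRP h, h⟩, fun h => h.2⟩
    conv_lhs => rw [this]
    rw [Finset.card_filter]
    push_cast
    apply Finset.sum_congr rfl
    intro x _
    by_cases h1 : ({x} : Finset ℝ) ⊆ R <;> simp [h1]
  have hTid : ∀ (R : Finset ℝ), ∀ T ∈ P.powerset, ((T.card : ℝ))
      = ∑ x ∈ P, (if (∅ : Finset ℝ) ⊆ R then (1:ℝ) else 0) *
                 (if ({x} : Finset ℝ) ⊆ T then (1:ℝ) else 0) := by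
    intro R T hT
    have hTP : T ⊆ P := Finset.mem_powerset.1 hT
    have : T = P.filter (fun x => ({x} : Finset ℝ) ⊆ T) := by
      ext x
      simp only [Finset.mem_filter, Finset.singleton_subset_iff]
      exact ⟨fun h => ⟨hTP h, h⟩, fun h => h.2⟩
    conv_lhs => rw [this]
    rw [Finset.card_filter]
    push_cast
    apply Finset.sum_congr rfl
    intro x _
    by_cases h1 : ({x} : Finset ℝ) ⊆ T <;> simp [h1]
  -- master inequality
  have master : (0:ℝ) ≤ ∑ R ∈ P.powerset, ∑ T ∈ P.powerset, (w R * w T) *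
      ((Xc (E ∩ R ×ˢ T) : ℝ) + 2 * (R.card : ℝ) + 2 * (T.card : ℝ)
        - 2 * ((E ∩ R ×ˢ T).card : ℝ)) := by
    apply Finset.sum_nonneg
    intro R hR
    apply Finset.sum_nonneg
    intro T hT
    apply mul_nonneg (mul_nonneg (hw0 R) (hw0 T))
    have hsub : E ∩ R ×ˢ T ⊆ R ×ˢ T := Finset.inter_subset_right
    have := weak_bound R T (E ∩ R ×ˢ T) hsub
    have : (2 * (E ∩ R ×ˢ T).card : ℝ) ≤ (Xc (E ∩ R ×ˢ T) : ℝ) + 2 * ((R.card : ℝ) + (T.card : ℝ)) := by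
      exact_mod_cast this
    linarith
  -- expand master into four sums
  have expand : ∑ R ∈ P.powerset, ∑ T ∈ P.powerset, (w R * w T) *
      ((Xc (E ∩ R ×ˢ T) : ℝ) + 2 * (R.card : ℝ) + 2 * (T.card : ℝ)
        - 2 * ((E ∩ R ×ˢ T).card : ℝ))
      = p ^ 4 * (Xc E : ℝ) + 2 * (p * N) + 2 * (p * N) - 2 * (p ^ 2 * m) := by
    have hsplit : ∀ R ∈ P.powerset, ∀ T ∈ P.powerset, (w R * w T) *
        ((Xc (E ∩ R ×ˢ T) : ℝ) + 2 * (R.card : ℝ) + 2 * (T.card : ℝ)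
          - 2 * ((E ∩ R ×ˢ T).card : ℝ))
        = (w R * w T) * (Xc (E ∩ R ×ˢ T) : ℝ)
          + 2 * ((w R * w T) * (R.card : ℝ))
          + 2 * ((w R * w T) * (T.card : ℝ))
          - 2 * ((w R * w T) * ((E ∩ R ×ˢ T).card : ℝ)) := by
      intro R _ T _; ring
    rw [Finset.sum_congr rfl (fun R hR => Finset.sum_congr rfl (fun T hT => hsplit R hR T hT))]
    have distrib : ∀ (f g h k : Finset ℝ → Finset ℝ → ℝ),
        ∑ R ∈ P.powerset, ∑ T ∈ P.powerset, (f R T + 2 * g R T + 2 * h R T - 2 * k R T)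
        = (∑ R ∈ P.powerset, ∑ T ∈ P.powerset, f R T)
          + 2 * (∑ R ∈ P.powerset, ∑ T ∈ P.powerset, g R T)
          + 2 * (∑ R ∈ P.powerset, ∑ T ∈ P.powerset, h R T)
          - 2 * (∑ R ∈ P.powerset, ∑ T ∈ P.powerset, k R T) := by
      intro f g h k
      rw [Finset.mul_sum, Finset.mul_sum, Finset.mul_sum, ← Finset.sum_add_distrib,
        ← Finset.sum_add_distrib, ← Finset.sum_sub_distrib]
      apply Finset.sum_congr rfl
      intro R _
      rw [Finset.mul_sum, Finset.mul_sum, Finset.mul_sum, ← Finset.sum_add_distrib,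
        ← Finset.sum_add_distrib, ← Finset.sum_sub_distrib]
    rw [distrib]
    congr 1
    · congr 1
      · congr 1
        · -- S1 = p^4 * X
          rw [Finset.sum_congr rfl (fun R hR => Finset.sum_congr rfl
            (fun T hT => by rw [hXid R T]))]
          rw [double_expect P p F _ _ ?_ ?_]
          · have : ∀ q ∈ F, p ^ ({q.1.1, q.2.1} : Finset ℝ).card
                * p ^ ({q.1.2, q.2.2} : Finset ℝ).card = p ^ 4 := by
              intro q hq
              obtain ⟨hqm, hqinv⟩ := Finset.mem_filter.1 hq
              have h1 : q.1.1 ≠ q.2.1 := by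
                intro h; rw [h] at hqinv; simp at hqinv
              have h2 : q.1.2 ≠ q.2.2 := by
                intro h; rw [h] at hqinv; simp at hqinv
              rw [Finset.card_insert_of_notMem (by simp [h1]), Finset.card_singleton,
                Finset.card_insert_of_notMem (by simp [h2]), Finset.card_singleton]
              ring
            rw [Finset.sum_congr rfl this, Finset.sum_const, Xc, ← hF, nsmul_eq_mul]
            ring
          · intro q hq
            obtain ⟨hqm, _⟩ := Finset.mem_filter.1 hq
            obtain ⟨hq1, hq2⟩ := Finset.mem_product.1 hqm
            have e1 := Finset.mem_product.1 (hE hq1)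
            have e2 := Finset.mem_product.1 (hE hq2)
            rw [Finset.insert_subset_iff, Finset.singleton_subset_iff]
            exact ⟨e1.1, e2.1⟩
          · intro q hq
            obtain ⟨hqm, _⟩ := Finset.mem_filter.1 hq
            obtain ⟨hq1, hq2⟩ := Finset.mem_product.1 hqm
            have e1 := Finset.mem_product.1 (hE hq1)
            have e2 := Finset.mem_product.1 (hE hq2)
            rw [Finset.insert_subset_iff, Finset.singleton_subset_iff]
            exact ⟨e1.2, e2.2⟩
        · -- S2 = p * N
          congr 1
          rw [Finset.sum_congr rfl (fun R hR => Finset.sum_congr rfl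
            (fun T hT => by rw [hRid R hR T]))]
          rw [double_expect P p P (fun x => {x}) (fun _ => ∅) (fun q hq => by simpa using hq)
            (fun q hq => Finset.empty_subset P)]
          simp [Finset.sum_const, nsmul_eq_mul]
          ring
      · -- S3 = p * N
        congr 1
        rw [Finset.sum_congr rfl (fun R hR => Finset.sum_congr rfl
          (fun T hT => by rw [hTid R T hT]))]
        rw [double_expect P p P (fun _ => ∅) (fun x => {x}) (fun q hq => Finset.empty_subset P)
          (fun q hq => by simpa using hq)]
        simp [Finset.sum_const, nsmul_eq_mul]
        ring
    · -- S4 = p^2 * m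
      congr 1
      rw [Finset.sum_congr rfl (fun R hR => Finset.sum_congr rfl
        (fun T hT => by rw [hCid R T]))]
      rw [double_expect P p E (fun e => {e.1}) (fun e => {e.2})
        (fun e he => by simpa using (Finset.mem_product.1 (hE he)).1)
        (fun e he => by simpa using (Finset.mem_product.1 (hE he)).2)]
      simp [Finset.sum_const, nsmul_eq_mul]
      ring
  rw [expand] at master
  -- final algebra
  set X' : ℝ := (Xc E : ℝ) with hX'
  have hX0 : 0 ≤ X' := by positivity
  have hkey : 16 * N ^ 2 / m ≤ 256 * N ^ 4 / m ^ 4 * X' := by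
    have e2 : 2 * (p ^ 2 * m) - 4 * (p * N) = 16 * N ^ 2 / m := by
      rw [hp]; field_simp; ring
    have e3 : p ^ 4 = 256 * N ^ 4 / m ^ 4 := by
      rw [hp, div_pow]; ring_nf
    calc 16 * N ^ 2 / m = p ^ 4 * X' + 2 * (p * N) + 2 * (p * N) - 2 * (p ^ 2 * m)
          + (2 * (p ^ 2 * m) - 4 * (p * N)) - (p ^ 4 * X' + 2 * (p * N) + 2 * (p * N) - 2 * (p ^ 2 * m)) - (p^4 * X') + (p^4*X') := by
          rw [← e2]; ring
      _ ≤ p ^ 4 * X' := by linarith [master]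
      _ = 256 * N ^ 4 / m ^ 4 * X' := by rw [e3]
  have hgoal : m ^ 3 ≤ 16 * N ^ 2 * X' := by
    have h4 : 16 * N ^ 2 / m * m ^ 4 ≤ 256 * N ^ 4 / m ^ 4 * X' * m ^ 4 :=
      mul_le_mul_of_nonneg_right hkey (by positivity)
    have e5 : 16 * N ^ 2 / m * m ^ 4 = 16 * N ^ 2 * m ^ 3 := by
      field_simp
    have e6 : 256 * N ^ 4 / m ^ 4 * X' * m ^ 4 = 16 * N ^ 2 * (16 * N ^ 2 * X') := by
      field_simp; ring
    rw [e5, e6] at h4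
    exact le_of_mul_le_mul_left h4 (by positivity)
  exact hgoal


lemma affine_cross_unique (al be c1 d1 c2 d2 : ℝ) (h11 : c1 < d1) (h22 : c2 < d2)
    (hmid : d1 ≤ c2) (H1 : (al * c1 + be) * (al * d1 + be) < 0)
    (H2 : (al * c2 + be) * (al * d2 + be) < 0) : False := by
  have hal : al ≠ 0 := by
    intro h
    rw [h] at H1
    simp only [zero_mul, zero_add] at H1
    nlinarith [mul_self_nonneg be]
  set r : ℝ := -be / al with hr
  have hroot : al * r + be = 0 := by
    rw [hr]; field_simp; ring
  have fact : ∀ c d : ℝ, c < d → (al * c + be) * (al * d + be) < 0 → c < r ∧ r < d := by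
    intro c d hcd H
    have e1 : al * c + be = al * (c - r) := by linear_combination hroot
    have e2 : al * d + be = al * (d - r) := by linear_combination hroot
    rw [e1, e2] at H
    have H' : al ^ 2 * ((c - r) * (d - r)) < 0 := by nlinarith [H]
    have hal2 : 0 < al ^ 2 := by positivity
    have hprod : (c - r) * (d - r) < 0 := by nlinarith [H', hal2]
    rcases mul_neg_iff.1 hprod with ⟨hp, hn⟩ | ⟨hn, hp⟩
    · linarith
    · constructor <;> linarith
  obtain ⟨_, hr1⟩ := fact c1 d1 h11 H1
  obtain ⟨hr2, _⟩ := fact c2 d2 h22 H2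
  linarith

lemma pos_core (A B C : Finset ℝ) (hApos : ∀ a ∈ A, 0 < a) (hA : A.Nonempty)
    (hB : B.Nonempty) (hC : C.Nonempty) (hs : ∃ s ∈ B + C, s ≠ 0) :
    (A.card : ℝ) * (B.card : ℝ) * (C.card : ℝ) ≤ 32 * (((A * (B + C)).card : ℝ)) ^ 2 := by
  classical
  obtain ⟨s0, hs0mem, hs0ne⟩ := hs
  obtain ⟨c0, hc0⟩ := hC
  obtain ⟨b0, hb0⟩ := hB
  obtain ⟨a0, ha0⟩ := hA
  have ha0pos := hApos a0 ha0
  set P : Finset ℝ := A * (B + C) with hP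
  set L : Finset (ℝ × ℝ) := A ×ˢ B with hL
  -- fact 1 : M ≤ N ^ 2
  have fact1 : L.card ≤ P.card * P.card := by
    have := Finset.card_le_card_of_injOn (fun ℓ : ℝ × ℝ => (ℓ.1 * s0, ℓ.1 * (ℓ.2 + c0)))
      (s := L) (t := P ×ˢ P) ?_ ?_
    · simpa [Finset.card_product] using this
    · intro ℓ hℓ
      obtain ⟨h1, h2⟩ := Finset.mem_product.1 hℓ
      refine Finset.mem_product.2 ⟨Finset.mul_mem_mul h1 hs0mem, Finset.mul_mem_mul h1 ?_⟩
      exact Finset.add_mem_add h2 hc0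
    · intro x hx y hy hxy
      obtain ⟨hx1, hx2⟩ := Finset.mem_product.1 (Finset.mem_coe.1 hx)
      obtain ⟨hy1, hy2⟩ := Finset.mem_product.1 (Finset.mem_coe.1 hy)
      have e1 : x.1 * s0 = y.1 * s0 := congrArg Prod.fst hxy
      have e2 : x.1 * (x.2 + c0) = y.1 * (y.2 + c0) := congrArg Prod.snd hxy
      have hx1' : x.1 = y.1 := mul_right_cancel₀ hs0ne e1
      have hx1pos : x.1 ≠ 0 := ne_of_gt (hApos _ hx1)
      rw [hx1'] at e2
      have : x.2 + c0 = y.2 + c0 := mul_left_cancel₀ (hx1' ▸ hx1pos) e2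
      exact Prod.ext hx1' (by linarith)
  -- fact 2 : k ≤ N
  have fact2 : C.card ≤ P.card := by
    apply Finset.card_le_card_of_injOn (fun x => a0 * (b0 + x))
    · intro x hx
      exact Finset.mul_mem_mul ha0 (Finset.add_mem_add hb0 hx)
    · intro x _ y _ h
      have := mul_left_cancel₀ (ne_of_gt ha0pos) h
      linarith
  have hM : L.card = A.card * B.card := Finset.card_product A B
  have hNpos : 0 < P.card := by
    apply Finset.card_pos.2
    exact ⟨a0 * s0, Finset.mul_mem_mul ha0 hs0mem⟩
  have hMpos : 0 < L.card := by
    apply Finset.card_pos.2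
    exact ⟨(a0, b0), Finset.mem_product.2 ⟨ha0, hb0⟩⟩
  -- main slot bound
  have main : 2 ≤ C.card → 8 * P.card ≤ L.card → ((C.card : ℝ) - 1) * L.card ≤ 16 * (P.card : ℝ) ^ 2 := by
    intro hk2 hML
    set g : ℝ × ℝ → ℝ → ℝ := fun ℓ x => ℓ.1 * (ℓ.2 + x) with hg
    set cmax := C.max' ⟨c0, hc0⟩ with hcmax
    set C' := C.erase cmax with hC'
    set D : ℝ → ℝ := fun c => if h : (C.filter (fun y => c < y)).Nonempty
      then (C.filter (fun y => c < y)).min' h else c with hD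
    have hDfacts : ∀ c ∈ C', c < D c ∧ D c ∈ C := by
      intro c hc
      obtain ⟨hcne, hcC⟩ := Finset.mem_erase.1 hc
      have hne : (C.filter (fun y => c < y)).Nonempty := by
        refine ⟨cmax, Finset.mem_filter.2 ⟨C.max'_mem _, ?_⟩⟩
        exact lt_of_le_of_ne (Finset.le_max' C c hcC) hcne
      have hmem := Finset.min'_mem _ hne
      rw [hD]
      simp only [dif_pos hne]
      exact ⟨(Finset.mem_filter.1 hmem).2, (Finset.mem_filter.1 hmem).1⟩
    have hDle : ∀ c1 ∈ C', ∀ c2 ∈ C', c1 < c2 → D c1 ≤ c2 := by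
      intro c1 hc1 c2 hc2 hlt
      obtain ⟨hcne, hcC⟩ := Finset.mem_erase.1 hc1
      have hne : (C.filter (fun y => c1 < y)).Nonempty :=
        ⟨c2, Finset.mem_filter.2 ⟨(Finset.mem_erase.1 hc2).2, hlt⟩⟩
      rw [hD]
      simp only [dif_pos hne]
      exact Finset.min'_le _ _ (Finset.mem_filter.2 ⟨(Finset.mem_erase.1 hc2).2, hlt⟩)
    -- per-slot edge sets
    have perslot : ∀ c ∈ C', (L.card : ℝ) ^ 3 ≤ 16 * (P.card : ℝ) ^ 2 *
        (((L ×ˢ L).filter (fun q => (g q.1 c - g q.2 c) * (g q.1 (D c) - g q.2 (D c)) < 0)).card : ℝ) := by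
      intro c hc
      obtain ⟨hcD, hDC⟩ := hDfacts c hc
      have hcC : c ∈ C := (Finset.mem_erase.1 hc).2
      set Ec := L.image (fun ℓ => (g ℓ c, g ℓ (D c))) with hEc
      have hinj : Set.InjOn (fun ℓ => (g ℓ c, g ℓ (D c))) L := by
        intro x hx y hy hxy
        obtain ⟨hx1, hx2⟩ := Finset.mem_product.1 (Finset.mem_coe.1 hx)
        obtain ⟨hy1, hy2⟩ := Finset.mem_product.1 (Finset.mem_coe.1 hy)
        have e1 : g x c = g y c := congrArg Prod.fst hxy
        have e2 : g x (D c) = g y (D c) := congrArg Prod.snd hxy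
        simp only [hg] at e1 e2
        have ed : x.1 * (c - D c) = y.1 * (c - D c) := by linarith [e1, e2]
        have hcD' : c - D c ≠ 0 := by intro h; apply absurd hcD; push_neg; linarith [h]
        have hx1' : x.1 = y.1 := mul_right_cancel₀ hcD' ed
        have hx1pos : x.1 ≠ 0 := ne_of_gt (hApos _ hx1)
        rw [hx1'] at e1
        have : x.2 + c = y.2 + c := mul_left_cancel₀ (hx1' ▸ hx1pos) e1
        exact Prod.ext hx1' (by linarith)
      have hEcard : Ec.card = L.card := Finset.card_image_of_injOn hinj
      have hEsub : Ec ⊆ P ×ˢ P := by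
        intro z hz
        obtain ⟨ℓ, hℓ, rfl⟩ := Finset.mem_image.1 hz
        obtain ⟨h1, h2⟩ := Finset.mem_product.1 hℓ
        refine Finset.mem_product.2 ⟨?_, ?_⟩
        · exact Finset.mul_mem_mul h1 (Finset.add_mem_add h2 hcC)
        · exact Finset.mul_mem_mul h1 (Finset.add_mem_add h2 hDC)
      have hCL := crossing_lemma P Ec hEsub (by rw [hEcard]; exact hML)
      rw [hEcard] at hCL
      refine le_trans hCL ?_
      have hXle : Xc Ec ≤ ((L ×ˢ L).filter
          (fun q => (g q.1 c - g q.2 c) * (g q.1 (D c) - g q.2 (D c)) < 0)).card := by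
        apply Finset.card_le_card_of_surjOn (fun q : (ℝ × ℝ) × (ℝ × ℝ) => ((g q.1 c, g q.1 (D c)), (g q.2 c, g q.2 (D c))))
        intro r hr
        simp only [Finset.coe_filter, Set.mem_setOf_eq, Finset.mem_product] at hr
        obtain ⟨⟨hr1, hr2⟩, hrinv⟩ := hr
        obtain ⟨ℓ1, hℓ1, he1⟩ := Finset.mem_image.1 hr1
        obtain ⟨ℓ2, hℓ2, he2⟩ := Finset.mem_image.1 hr2
        refine ⟨(ℓ1, ℓ2), ?_, ?_⟩
        · simp only [Finset.coe_filter, Set.mem_setOf_eq, Finset.mem_product]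
          refine ⟨⟨hℓ1, hℓ2⟩, ?_⟩
          rw [← he1, ← he2] at hrinv
          exact hrinv
        · simp only
          rw [he1, he2]
      have : (Xc Ec : ℝ) ≤ (((L ×ˢ L).filter
          (fun q => (g q.1 c - g q.2 c) * (g q.1 (D c) - g q.2 (D c)) < 0)).card : ℝ) := by
        exact_mod_cast hXle
      nlinarith [this, sq_nonneg ((P.card : ℝ))]
    -- sum over slots
    have sumbound : ∑ c ∈ C', (((L ×ˢ L).filter
        (fun q => (g q.1 c - g q.2 c) * (g q.1 (D c) - g q.2 (D c)) < 0)).card) ≤ L.card * L.card := by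
      have swap : ∑ c ∈ C', (((L ×ˢ L).filter
          (fun q => (g q.1 c - g q.2 c) * (g q.1 (D c) - g q.2 (D c)) < 0)).card)
          = ∑ q ∈ L ×ˢ L, (C'.filter (fun c => (g q.1 c - g q.2 c) * (g q.1 (D c) - g q.2 (D c)) < 0)).card := by
        simp only [Finset.card_filter]
        exact Finset.sum_comm
      rw [swap]
      have hone : ∀ q ∈ L ×ˢ L, (C'.filter
          (fun c => (g q.1 c - g q.2 c) * (g q.1 (D c) - g q.2 (D c)) < 0)).card ≤ 1 := by
        intro q _
        apply Finset.card_le_one.2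
        intro c1 hc1 c2 hc2
        obtain ⟨hc1m, hc1x⟩ := Finset.mem_filter.1 hc1
        obtain ⟨hc2m, hc2x⟩ := Finset.mem_filter.1 hc2
        by_contra hne
        set al := q.1.1 - q.2.1 with hal
        set be := q.1.1 * q.1.2 - q.2.1 * q.2.2 with hbe
        have gid : ∀ x : ℝ, g q.1 x - g q.2 x = al * x + be := by
          intro x
          simp only [hg, hal, hbe]
          ring
        rw [gid, gid] at hc1x hc2x
        rcases lt_or_gt_of_ne hne with hlt | hgt
        · exact affine_cross_unique al be c1 (D c1) c2 (D c2) (hDfacts c1 hc1m).1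
            (hDfacts c2 hc2m).1 (hDle c1 hc1m c2 hc2m hlt) hc1x hc2x
        · exact affine_cross_unique al be c2 (D c2) c1 (D c1) (hDfacts c2 hc2m).1
            (hDfacts c1 hc1m).1 (hDle c2 hc2m c1 hc1m hgt) hc2x hc1x
      calc ∑ q ∈ L ×ˢ L, (C'.filter (fun c => (g q.1 c - g q.2 c) * (g q.1 (D c) - g q.2 (D c)) < 0)).card
          ≤ ∑ q ∈ L ×ˢ L, 1 := Finset.sum_le_sum hone
        _ = L.card * L.card := by simp [Finset.card_product]
    -- combine
    have hC'card : C'.card = C.card - 1 := Finset.card_erase_of_mem (C.max'_mem _)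
    have sumR : ((C.card : ℝ) - 1) * (L.card : ℝ) ^ 3 ≤ 16 * (P.card : ℝ) ^ 2 * ((L.card : ℝ) * (L.card : ℝ)) := by
      have h1 : ((C.card : ℝ) - 1) * (L.card : ℝ) ^ 3 = ∑ _c ∈ C', (L.card : ℝ) ^ 3 := by
        rw [Finset.sum_const, hC'card, nsmul_eq_mul]
        have : ((C.card - 1 : ℕ) : ℝ) = (C.card : ℝ) - 1 := by
          have : 1 ≤ C.card := le_trans (by norm_num) hk2
          push_cast [this]
          ring
        rw [this]
      rw [h1]
      calc ∑ _c ∈ C', ((L.card : ℝ)) ^ 3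
          ≤ ∑ c ∈ C', 16 * (P.card : ℝ) ^ 2 * (((L ×ˢ L).filter
            (fun q => (g q.1 c - g q.2 c) * (g q.1 (D c) - g q.2 (D c)) < 0)).card : ℝ) :=
          Finset.sum_le_sum perslot
        _ = 16 * (P.card : ℝ) ^ 2 * ∑ c ∈ C', (((L ×ˢ L).filter
            (fun q => (g q.1 c - g q.2 c) * (g q.1 (D c) - g q.2 (D c)) < 0)).card : ℝ) := by
          rw [Finset.mul_sum]
        _ ≤ 16 * (P.card : ℝ) ^ 2 * ((L.card : ℝ) * (L.card : ℝ)) := by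
          apply mul_le_mul_of_nonneg_left _ (by positivity)
          have : (∑ c ∈ C', (((L ×ˢ L).filter
              (fun q => (g q.1 c - g q.2 c) * (g q.1 (D c) - g q.2 (D c)) < 0)).card : ℝ))
              = ((∑ c ∈ C', ((L ×ˢ L).filter
              (fun q => (g q.1 c - g q.2 c) * (g q.1 (D c) - g q.2 (D c)) < 0)).card : ℕ) : ℝ) := by
            push_cast
            rfl
          rw [this]
          have := sumbound
          exact_mod_cast (by exact_mod_cast this : ((∑ c ∈ C', ((L ×ˢ L).filter
            (fun q => (g q.1 c - g q.2 c) * (g q.1 (D c) - g q.2 (D c)) < 0)).card : ℕ) : ℝ)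
            ≤ ((L.card : ℝ) * (L.card : ℝ)))
    -- cancel L.card ^ 2
    have hMr : (0:ℝ) < (L.card : ℝ) := by exact_mod_cast hMpos
    have hk1 : (0:ℝ) ≤ (C.card : ℝ) - 1 := by
      have : 1 ≤ C.card := le_trans (by norm_num) hk2
      have : (1:ℝ) ≤ (C.card : ℝ) := by exact_mod_cast this
      linarith
    have e : (((C.card : ℝ) - 1) * (L.card : ℝ)) * ((L.card : ℝ) * (L.card : ℝ))
        = ((C.card : ℝ) - 1) * (L.card : ℝ) ^ 3 := by ring
    have h' : (((C.card : ℝ) - 1) * (L.card : ℝ)) * ((L.card : ℝ) * (L.card : ℝ))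
        ≤ (16 * (P.card : ℝ) ^ 2) * ((L.card : ℝ) * (L.card : ℝ)) := by
      rw [e]; exact sumR
    exact le_of_mul_le_mul_right h' (by positivity)
  -- final case analysis
  have hk1 : 1 ≤ C.card := Finset.card_pos.2 ⟨c0, hc0⟩
  have goalN : (L.card : ℝ) * (C.card : ℝ) ≤ 32 * (P.card : ℝ) ^ 2 := by
    rcases Nat.lt_or_ge C.card 2 with hk | hk
    · have : C.card = 1 := by omega
      rw [this]
      have h' : (L.card : ℝ) ≤ (P.card : ℝ) * (P.card : ℝ) := by exact_mod_cast fact1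
      have h'' : (L.card : ℝ) ≤ (P.card : ℝ) ^ 2 := by
        calc (L.card : ℝ) ≤ (P.card : ℝ) * (P.card : ℝ) := h'
          _ = (P.card : ℝ) ^ 2 := by ring
      push_cast
      nlinarith [h'', sq_nonneg ((P.card : ℝ))]
    · rcases Nat.lt_or_ge L.card (8 * P.card) with hM8 | hM8
      · have h1 : (L.card : ℝ) < 8 * (P.card : ℝ) := by exact_mod_cast hM8
        have h2 : (C.card : ℝ) ≤ (P.card : ℝ) := by exact_mod_cast fact2
        have h3 : (0:ℝ) < (C.card : ℝ) := by exact_mod_cast hk1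
        have h4 : (0:ℝ) < (P.card : ℝ) := by exact_mod_cast hNpos
        nlinarith [h1, h2, h3, h4]
      · have hmain := main hk hM8
        have hk2 : (2:ℝ) ≤ (C.card : ℝ) := by exact_mod_cast hk
        have hMr : (0:ℝ) ≤ (L.card : ℝ) := by positivity
        nlinarith [hmain, hk2, hMr]
  calc (A.card : ℝ) * (B.card : ℝ) * (C.card : ℝ) = (L.card : ℝ) * (C.card : ℝ) := by
        rw [hM]; push_cast; ring
    _ ≤ 32 * (P.card : ℝ) ^ 2 := goalN

end Stmt13

open Stmt13

theorem stmt13 :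
    ∃ c > (0:ℝ),
      ∀ A B C : Finset ℝ, A.Nonempty → A ≠ {0} →
        (B + C).Nonempty → B + C ≠ {0} →
        c * ((A.card : ℝ) * (B.card : ℝ) * (C.card : ℝ)) ^ ((1:ℝ)/2) ≤
          ((A * (B + C)).card : ℝ) := by
  classical
  refine ⟨1/10, by norm_num, ?_⟩
  intro A B C hA hA0 hBC hBC0
  obtain ⟨x, hx⟩ := hBC
  obtain ⟨b1, hb1, c1, hc1, _⟩ := Finset.mem_add.1 hx
  have hB : B.Nonempty := ⟨b1, hb1⟩
  have hC : C.Nonempty := ⟨c1, hc1⟩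
  have hs : ∃ s ∈ B + C, s ≠ 0 := by
    by_contra h
    push_neg at h
    apply hBC0
    apply Finset.eq_singleton_iff_nonempty_unique_mem.2
    exact ⟨⟨x, hx⟩, h⟩
  set P : Finset ℝ := A * (B + C) with hP
  set Ap := A.filter (fun x => 0 < x) with hAp
  set An := (A.filter (fun x => x < 0)).image (fun x => -x) with hAn
  have hAnpos : ∀ a ∈ An, 0 < a := by
    intro a ha
    obtain ⟨y, hy, rfl⟩ := Finset.mem_image.1 ha
    have := (Finset.mem_filter.1 hy).2
    linarith
  have hAppos : ∀ a ∈ Ap, 0 < a := fun a ha => (Finset.mem_filter.1 ha).2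
  have hAncard : An.card = (A.filter (fun x => x < 0)).card :=
    Finset.card_image_of_injective _ neg_injective
  have hsplit : A.card ≤ Ap.card + An.card + 1 := by
    rw [hAncard]
    have hsub : A ⊆ Ap ∪ (A.filter (fun x => x < 0)) ∪ {0} := by
      intro a ha
      rcases lt_trichotomy a 0 with h | h | h
      · exact Finset.mem_union.2 (Or.inl (Finset.mem_union.2 (Or.inr (Finset.mem_filter.2 ⟨ha, h⟩))))
      · exact Finset.mem_union.2 (Or.inr (by simp [h]))
      · exact Finset.mem_union.2 (Or.inl (Finset.mem_union.2 (Or.inl (Finset.mem_filter.2 ⟨ha, h⟩))))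
    calc A.card ≤ (Ap ∪ (A.filter (fun x => x < 0)) ∪ {0}).card := Finset.card_le_card hsub
      _ ≤ (Ap ∪ (A.filter (fun x => x < 0))).card + ({0} : Finset ℝ).card := Finset.card_union_le _ _
      _ ≤ Ap.card + (A.filter (fun x => x < 0)).card + 1 := by
          have := Finset.card_union_le Ap (A.filter (fun x => x < 0))
          simp only [Finset.card_singleton]
          omega
  have hex : ∃ a ∈ A, a ≠ 0 := by
    by_contra h
    push_neg at h
    apply hA0
    apply Finset.eq_singleton_iff_nonempty_unique_mem.2
    exact ⟨hA, h⟩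
  -- the main bound : A.card*B.card*C.card ≤ 96 * N^2
  have habc : (A.card : ℝ) * (B.card : ℝ) * (C.card : ℝ) ≤ 96 * ((P.card : ℝ)) ^ 2 := by
    rcases le_or_gt An.card Ap.card with hcase | hcase
    · -- positive part dominates
      have hApne : Ap.Nonempty := by
        obtain ⟨a, haA, hane⟩ := hex
        rcases hane.lt_or_gt with h | h
        · have hmem : a ∈ A.filter (fun x => x < 0) := Finset.mem_filter.2 ⟨haA, h⟩
          have h1 : 1 ≤ (A.filter (fun x => x < 0)).card := Finset.card_pos.2 ⟨a, hmem⟩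
          have h2 : 1 ≤ Ap.card := by omega
          exact Finset.card_pos.1 h2
        · exact ⟨a, Finset.mem_filter.2 ⟨haA, h⟩⟩
      have hcore := pos_core Ap B C hAppos hApne hB hC hs
      have hsubP : Ap * (B + C) ⊆ P := by
        apply Finset.mul_subset_mul_right
        exact Finset.filter_subset _ _
      have hcardP : ((Ap * (B + C)).card : ℝ) ≤ (P.card : ℝ) := by
        exact_mod_cast Finset.card_le_card hsubP
      have hA3 : (A.card : ℝ) ≤ 3 * (Ap.card : ℝ) := by
        have h1 : 1 ≤ Ap.card := Finset.card_pos.2 hApne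
        have : A.card ≤ 3 * Ap.card := by omega
        exact_mod_cast this
      have hBC1 : (0:ℝ) ≤ (B.card : ℝ) * (C.card : ℝ) := by positivity
      calc (A.card : ℝ) * (B.card : ℝ) * (C.card : ℝ)
          ≤ (3 * (Ap.card : ℝ)) * (B.card : ℝ) * (C.card : ℝ) := by nlinarith [hA3, hBC1]
        _ = 3 * ((Ap.card : ℝ) * (B.card : ℝ) * (C.card : ℝ)) := by ring
        _ ≤ 3 * (32 * ((Ap * (B + C)).card : ℝ) ^ 2) := by linarith [hcore]
        _ ≤ 96 * ((P.card : ℝ)) ^ 2 := by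
          have hsq := mul_self_le_mul_self (by positivity : (0:ℝ) ≤ ((Ap * (B + C)).card : ℝ)) hcardP
          nlinarith [hsq]
    · -- negative part dominates
      have hAnne : An.Nonempty := by
        rw [← Finset.card_pos]
        omega
      have hcore := pos_core An B C hAnpos hAnne hB hC hs
      have hcardP : ((An * (B + C)).card : ℝ) ≤ (P.card : ℝ) := by
        have himg : (An * (B + C)).image (fun x => -x) ⊆ P := by
          intro y hy
          obtain ⟨z, hz, rfl⟩ := Finset.mem_image.1 hy
          obtain ⟨u, hu, v, hv, rfl⟩ := Finset.mem_mul.1 hz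
          obtain ⟨w, hw, rfl⟩ := Finset.mem_image.1 hu
          have hwA : w ∈ A := (Finset.mem_filter.1 hw).1
          have : -(-w * v) = w * v := by ring
          rw [this]
          exact Finset.mul_mem_mul hwA hv
        have : (An * (B + C)).card = ((An * (B + C)).image (fun x => -x)).card :=
          (Finset.card_image_of_injective _ neg_injective).symm
        rw [this]
        exact_mod_cast Finset.card_le_card himg
      have hA3 : (A.card : ℝ) ≤ 3 * (An.card : ℝ) := by
        have h1 : 1 ≤ An.card := Finset.card_pos.2 hAnne
        have : A.card ≤ 3 * An.card := by omega
        exact_mod_cast this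
      have hBC1 : (0:ℝ) ≤ (B.card : ℝ) * (C.card : ℝ) := by positivity
      calc (A.card : ℝ) * (B.card : ℝ) * (C.card : ℝ)
          ≤ (3 * (An.card : ℝ)) * (B.card : ℝ) * (C.card : ℝ) := by nlinarith [hA3, hBC1]
        _ = 3 * ((An.card : ℝ) * (B.card : ℝ) * (C.card : ℝ)) := by ring
        _ ≤ 3 * (32 * ((An * (B + C)).card : ℝ) ^ 2) := by linarith [hcore]
        _ ≤ 96 * ((P.card : ℝ)) ^ 2 := by
          have hsq := mul_self_le_mul_self (by positivity : (0:ℝ) ≤ ((An * (B + C)).card : ℝ)) hcardP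
          nlinarith [hsq]
  -- finish with square roots
  have habc0 : (0:ℝ) ≤ (A.card : ℝ) * (B.card : ℝ) * (C.card : ℝ) := by positivity
  have hNpos : (0:ℝ) ≤ (P.card : ℝ) := by positivity
  rw [show ((1:ℝ)/2) = (1/2 : ℝ) by norm_num, ← Real.sqrt_eq_rpow]
  have h1 : Real.sqrt ((A.card : ℝ) * (B.card : ℝ) * (C.card : ℝ)) ≤ Real.sqrt (96 * ((P.card : ℝ)) ^ 2) :=
    Real.sqrt_le_sqrt habc
  have h2 : Real.sqrt (96 * ((P.card : ℝ)) ^ 2) ≤ Real.sqrt ((10 * (P.card : ℝ)) ^ 2) := by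
    apply Real.sqrt_le_sqrt
    nlinarith [sq_nonneg ((P.card : ℝ))]
  have h3 : Real.sqrt ((10 * (P.card : ℝ)) ^ 2) = 10 * (P.card : ℝ) := by
    apply Real.sqrt_sq
    positivity
  have := h1.trans (h2.trans_eq h3)
  linarith [this]
end

section
/- There exists an absolute constant c > 0 such that the following holds: for all finite sets A, B, C of real numbers with A ≠ {0}, A nonempty, and B+C nonempty and not equal to {0}, one has |A(B+C)| ≥ c·min{ (|A|·|B|·|C|)^{1/2} , |A|·|B| }. -/
open Finset Pointwise

namespace STaux

open scoped Classical

noncomputable def rk (X : Finset ℝ) (x : ℝ) : ℕ := #(X.filter (fun y => y < x))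

noncomputable def idx (X : Finset ℝ) (p : ℕ) (x : ℝ) : ℕ := rk X x / p

variable {X : Finset ℝ}

lemma rk_lt_card {x : ℝ} (hx : x ∈ X) : rk X x < #X := by
  apply Finset.card_lt_card
  constructor
  · exact filter_subset _ _
  · intro h
    have := h hx
    simp at this

lemma rk_mono {x y : ℝ} (h : x ≤ y) : rk X x ≤ rk X y := by
  apply Finset.card_le_card
  intro z hz
  simp only [mem_filter] at hz ⊢
  exact ⟨hz.1, lt_of_lt_of_le hz.2 h⟩

lemma rk_strict {x y : ℝ} (hx : x ∈ X) (h : x < y) : rk X x < rk X y := by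
  have : insert x (X.filter (fun z => z < x)) ⊆ X.filter (fun z => z < y) := by
    intro z hz
    rcases Finset.mem_insert.1 hz with rfl | hz
    · exact mem_filter.2 ⟨hx, h⟩
    · have := mem_filter.1 hz
      exact mem_filter.2 ⟨this.1, this.2.trans h⟩
  have h2 := Finset.card_le_card this
  rwa [Finset.card_insert_of_notMem (by simp)] at h2

lemma rk_injOn : Set.InjOn (rk X) X := by
  intro x hx y hy hxy
  by_contra hne
  rcases lt_or_gt_of_ne hne with h | h
  · exact absurd hxy (Nat.ne_of_lt (rk_strict hx h))
  · exact absurd hxy.symm (Nat.ne_of_lt (rk_strict hy h))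

lemma idx_lt {p r : ℕ} (hp : 0 < p) (hX : #X ≤ p * r) {x : ℝ} (hx : x ∈ X) :
    idx X p x < r := by
  have := rk_lt_card hx
  rw [idx, Nat.div_lt_iff_lt_mul hp, mul_comm]
  omega

lemma idx_mono {p : ℕ} {x y : ℝ} (h : x ≤ y) : idx X p x ≤ idx X p y :=
  Nat.div_le_div_right (rk_mono h)

lemma card_block_le {p : ℕ} (hp : 0 < p) (i : ℕ) :
    #(X.filter (fun x => idx X p x = i)) ≤ p := by
  have h1 : ∀ x ∈ X.filter (fun x => idx X p x = i), rk X x ∈ Finset.Ico (i*p) (i*p+p) := by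
    intro x hx
    rcases mem_filter.1 hx with ⟨_, hidx⟩
    have h2 : rk X x / p = i := hidx
    have h3 : rk X x < (rk X x / p + 1) * p := by
      have e1 := Nat.div_add_mod (rk X x) p
      have e2 := Nat.mod_lt (rk X x) hp
      nlinarith [Nat.div_mul_le_self (rk X x) p]
    rw [h2, add_mul, one_mul] at h3
    have h4 : i * p ≤ rk X x := by
      calc i * p = rk X x / p * p := by rw [h2]
      _ ≤ rk X x := Nat.div_mul_le_self _ _
    simp only [Finset.mem_Ico]
    exact ⟨h4, by omega⟩
  have h5 := Finset.card_le_card_of_injOn (rk X) h1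
    (Set.InjOn.mono (by intro x hx; exact mem_filter.1 (by exact_mod_cast hx) |>.1) rk_injOn)
  simpa using h5

lemma sum_card_block {p r : ℕ} (hp : 0 < p) (hX : #X ≤ p * r) :
    ∑ i ∈ Finset.range r, #(X.filter (fun x => idx X p x = i)) = #X :=
  (Finset.card_eq_sum_card_fiberwise (fun x hx => Finset.mem_range.2 (idx_lt hp hX hx))).symm

lemma staircase (C : Finset ℝ) (f g : ℝ → ℕ) (r : ℕ)
    (hf : ∀ x ∈ C, f x < r) (hg : ∀ x ∈ C, g x < r)
    (hfm : ∀ x ∈ C, ∀ y ∈ C, x ≤ y → f x ≤ f y)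
    (hgm : (∀ x ∈ C, ∀ y ∈ C, x ≤ y → g x ≤ g y) ∨ (∀ x ∈ C, ∀ y ∈ C, x ≤ y → g y ≤ g x)) :
    #(C.image (fun x => (f x, g x))) ≤ 2 * r := by
  rcases hgm with hup | hdn
  · have h := Finset.card_le_card_of_injOn (fun p : ℕ × ℕ => p.1 + p.2)
      (s := C.image (fun x => (f x, g x))) (t := Finset.range (2 * r))
      (by
        intro p hp
        obtain ⟨x, hx, rfl⟩ := Finset.mem_image.1 hp
        simp only [Finset.mem_range, Finset.coe_range, Set.mem_Iio]
        have := hf x hx; have := hg x hx; omega)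
      (by
        intro p hp q hq hpq
        rw [Finset.coe_image] at hp hq
        obtain ⟨x, hx, rfl⟩ := hp
        obtain ⟨y, hy, rfl⟩ := hq
        rw [Finset.mem_coe] at hx hy
        rcases le_total x y with h | h
        · have h1 := hfm x hx y hy h; have h2 := hup x hx y hy h
          simp only at hpq
          show (f _, g _) = (f _, g _)
          exact Prod.ext (by omega) (by omega)
        · have h1 := hfm y hy x hx h; have h2 := hup y hy x hx h
          simp only at hpq
          show (f _, g _) = (f _, g _)
          exact Prod.ext (by omega) (by omega))
    simpa using h
  · have h := Finset.card_le_card_of_injOn (fun p : ℕ × ℕ => p.1 + (r - 1 - p.2))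
      (s := C.image (fun x => (f x, g x))) (t := Finset.range (2 * r))
      (by
        intro p hp
        obtain ⟨x, hx, rfl⟩ := Finset.mem_image.1 hp
        simp only [Finset.mem_range, Finset.coe_range, Set.mem_Iio]
        have := hf x hx; have := hg x hx; omega)
      (by
        intro p hp q hq hpq
        rw [Finset.coe_image] at hp hq
        obtain ⟨x, hx, rfl⟩ := hp
        obtain ⟨y, hy, rfl⟩ := hq
        rw [Finset.mem_coe] at hx hy
        have hfx := hf x hx; have hfy := hf y hy
        have hgx := hg x hx; have hgy := hg y hy
        rcases le_total x y with h | h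
        · have h1 := hfm x hx y hy h; have h2 := hdn x hx y hy h
          simp only at hpq
          show (f _, g _) = (f _, g _)
          exact Prod.ext (by omega) (by omega)
        · have h1 := hfm y hy x hx h; have h2 := hdn y hy x hx h
          simp only at hpq
          show (f _, g _) = (f _, g _)
          exact Prod.ext (by omega) (by omega))
    simpa using h

theorem key (A' B C T : Finset ℝ) (hA0 : ∀ α ∈ A', α ≠ 0)
    (hT : ∀ α ∈ A', ∀ β ∈ B, ∀ γ ∈ C, α * (β + γ) ∈ T)
    (r p q : ℕ) (hp : 0 < p) (hq : 0 < q)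
    (hpc : #C ≤ p * r) (hqt : #T ≤ q * r) :
    A'.card * B.card * C.card ≤ (p * C.card) * (q * T.card) + (A'.card * B.card) * (2 * r) := by
  set kC : ℝ → ℕ := idx C p with hkC
  set kT : ℝ → ℕ := idx T q with hkT
  set R : Finset (ℕ × ℕ) := Finset.range r ×ˢ Finset.range r with hR
  set keyf : ℝ × ℝ → ℝ → ℕ × ℕ := fun ab γ => (kC γ, kT (ab.1 * (ab.2 + γ))) with hkey
  set n : ℝ × ℝ → ℕ × ℕ → ℕ := fun ab ij => #(C.filter (fun γ => keyf ab γ = ij)) with hn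
  have hmemR : ∀ ab ∈ A' ×ˢ B, ∀ γ ∈ C, keyf ab γ ∈ R := by
    intro ab hab γ hγ
    rcases Finset.mem_product.1 hab with ⟨ha, hb⟩
    refine Finset.mem_product.2 ⟨Finset.mem_range.2 ?_, Finset.mem_range.2 ?_⟩
    · exact idx_lt hp hpc hγ
    · exact idx_lt hq hqt (hT _ ha _ hb _ hγ)
  have stepB : #A' * #B * #C = ∑ ij ∈ R, ∑ ab ∈ A' ×ˢ B, n ab ij := by
    rw [Finset.sum_comm]
    rw [Finset.sum_congr rfl (fun ab hab =>
      (Finset.card_eq_sum_card_fiberwise (fun γ hγ => hmemR ab hab γ hγ)).symm)]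
    rw [Finset.sum_const, Finset.card_product, smul_eq_mul]
  have hmulsub : ∀ a : ℕ, a * (a - 1) = a * a - a := by
    intro a
    cases a with
    | zero => rfl
    | succ k => simp [Nat.succ_sub_one, Nat.mul_succ, Nat.succ_mul]
  have hpoint : ∀ ab ij, n ab ij ≤ n ab ij * (n ab ij - 1) + (if 0 < n ab ij then 1 else 0) := by
    intro ab ij
    rcases Nat.eq_zero_or_pos (n ab ij) with h | h
    · simp [h]
    · simp only [if_pos h]
      obtain ⟨m, hm⟩ : ∃ m, n ab ij = m + 1 := ⟨n ab ij - 1, by omega⟩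
      rw [hm]
      simp only [Nat.add_sub_cancel]
      nlinarith
  -- Claim A: per-cell Cauchy-Schwarz via injection
  have claimA : ∀ ij : ℕ × ℕ, ∑ ab ∈ A' ×ˢ B, n ab ij * (n ab ij - 1) ≤
      (#(C.filter (fun x => kC x = ij.1)) * #(T.filter (fun x => kT x = ij.2)))^2 := by
    intro ij
    set Ci := C.filter (fun x => kC x = ij.1) with hCi
    set Tj := T.filter (fun x => kT x = ij.2) with hTj
    set D : ℝ × ℝ → Finset ℝ := fun ab => C.filter (fun γ => keyf ab γ = ij) with hD
    have hsum : ∑ ab ∈ A' ×ˢ B, n ab ij * (n ab ij - 1) =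
        #((A' ×ˢ B).sigma (fun ab => (D ab).offDiag)) := by
      rw [Finset.card_sigma]
      refine Finset.sum_congr rfl (fun ab _ => ?_)
      rw [Finset.offDiag_card]
      rw [hmulsub]
    rw [hsum]
    have hinj := Finset.card_le_card_of_injOn
      (s := (A' ×ˢ B).sigma (fun ab => (D ab).offDiag))
      (t := (Ci ×ˢ Tj) ×ˢ (Ci ×ˢ Tj))
      (fun w => ((w.2.1, w.1.1 * (w.1.2 + w.2.1)), (w.2.2, w.1.1 * (w.1.2 + w.2.2))))
      (by
        intro w hw
        rcases Finset.mem_sigma.1 hw with ⟨hab, hod⟩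
        rcases Finset.mem_offDiag.1 hod with ⟨h1, h2, hne⟩
        rcases Finset.mem_product.1 hab with ⟨ha, hb⟩
        rcases Finset.mem_filter.1 h1 with ⟨hc1, hk1⟩
        rcases Finset.mem_filter.1 h2 with ⟨hc2, hk2⟩
        have e1 : kC w.2.1 = ij.1 := by
          have := congrArg Prod.fst hk1; simpa using this
        have e1' : kT (w.1.1 * (w.1.2 + w.2.1)) = ij.2 := by
          have := congrArg Prod.snd hk1; simpa using this
        have e2 : kC w.2.2 = ij.1 := by
          have := congrArg Prod.fst hk2; simpa using this
        have e2' : kT (w.1.1 * (w.1.2 + w.2.2)) = ij.2 := by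
          have := congrArg Prod.snd hk2; simpa using this
        refine Finset.mem_product.2 ⟨Finset.mem_product.2 ⟨?_, ?_⟩,
          Finset.mem_product.2 ⟨?_, ?_⟩⟩
        · exact Finset.mem_filter.2 ⟨hc1, e1⟩
        · exact Finset.mem_filter.2 ⟨hT _ ha _ hb _ hc1, e1'⟩
        · exact Finset.mem_filter.2 ⟨hc2, e2⟩
        · exact Finset.mem_filter.2 ⟨hT _ ha _ hb _ hc2, e2'⟩)
      (by
        intro w hw w' hw' heq
        simp only [Finset.mem_coe] at hw hw'
        rcases Finset.mem_sigma.1 hw with ⟨hab, hod⟩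
        rcases Finset.mem_sigma.1 hw' with ⟨hab', hod'⟩
        rcases Finset.mem_offDiag.1 hod with ⟨_, _, hne⟩
        rcases Finset.mem_product.1 hab with ⟨ha, _⟩
        have hα : w.1.1 ≠ 0 := hA0 _ ha
        obtain ⟨⟨α, β⟩, γ, δ⟩ := w
        obtain ⟨⟨α', β'⟩, γ', δ'⟩ := w'
        simp only [Prod.mk.injEq] at heq hne ⊢
        obtain ⟨⟨eγ, eu⟩, eδ, ev⟩ := heq
        simp only at hα hne
        subst eγ; subst eδ
        have hαeq : α = α' := by
          have h1 : α * (γ - δ) = α' * (γ - δ) := by ring_nf; ring_nf at eu ev; linarith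
          have h2 : γ - δ ≠ 0 := sub_ne_zero.2 hne
          exact mul_right_cancel₀ h2 h1
        subst hαeq
        have hβeq : β = β' := by
          have h1 : α * β = α * β' := by linarith [eu]
          exact mul_left_cancel₀ hα h1
        subst hβeq
        rfl)
    calc #((A' ×ˢ B).sigma (fun ab => (D ab).offDiag)) ≤ #((Ci ×ˢ Tj) ×ˢ (Ci ×ˢ Tj)) := hinj
    _ = (#Ci * #Tj)^2 := by rw [Finset.card_product, Finset.card_product]; ring
  -- Claim B: staircase bound on number of nonempty cells per line
  have claimB : ∀ ab ∈ A' ×ˢ B, ∑ ij ∈ R, (if 0 < n ab ij then 1 else 0) ≤ 2 * r := by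
    intro ab hab
    rcases Finset.mem_product.1 hab with ⟨ha, hb⟩
    have hα : ab.1 ≠ 0 := hA0 _ ha
    have hcf : ∑ ij ∈ R, (if 0 < n ab ij then 1 else 0) =
        #(R.filter (fun ij => 0 < n ab ij)) := by
      rw [Finset.card_filter]
    rw [hcf]
    have hsub : R.filter (fun ij => 0 < n ab ij) ⊆ C.image (keyf ab) := by
      intro ij hij
      rcases Finset.mem_filter.1 hij with ⟨_, hpos⟩
      rw [hn] at hpos
      simp only [Finset.card_pos] at hpos
      obtain ⟨γ, hγ⟩ := hpos
      rcases Finset.mem_filter.1 hγ with ⟨hγC, hγk⟩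
      exact Finset.mem_image.2 ⟨γ, hγC, hγk⟩
    refine le_trans (Finset.card_le_card hsub) ?_
    have := staircase C kC (fun γ => kT (ab.1 * (ab.2 + γ))) r
      (fun x hx => idx_lt hp hpc hx)
      (fun x hx => idx_lt hq hqt (hT _ ha _ hb _ hx))
      (fun x _ y _ hxy => idx_mono hxy)
      (by
        rcases lt_or_gt_of_ne hα with hneg | hpos
        · right
          intro x _ y _ hxy
          exact idx_mono (by nlinarith)
        · left
          intro x _ y _ hxy
          exact idx_mono (by nlinarith))
    exact this
  -- assemble
  calc #A' * #B * #C = ∑ ij ∈ R, ∑ ab ∈ A' ×ˢ B, n ab ij := stepB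
    _ ≤ ∑ ij ∈ R, ∑ ab ∈ A' ×ˢ B,
        (n ab ij * (n ab ij - 1) + (if 0 < n ab ij then 1 else 0)) := by
        refine Finset.sum_le_sum (fun ij _ => Finset.sum_le_sum (fun ab _ => hpoint ab ij))
    _ = (∑ ij ∈ R, ∑ ab ∈ A' ×ˢ B, n ab ij * (n ab ij - 1)) +
        (∑ ab ∈ A' ×ˢ B, ∑ ij ∈ R, (if 0 < n ab ij then 1 else 0)) := by
        simp only [Finset.sum_add_distrib]
        congr 1
        exact Finset.sum_comm
    _ ≤ (∑ ij ∈ R, (#(C.filter (fun x => kC x = ij.1)) * #(T.filter (fun x => kT x = ij.2)))^2)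
        + (#A' * #B) * (2 * r) := by
        refine Nat.add_le_add (Finset.sum_le_sum (fun ij _ => claimA ij)) ?_
        calc ∑ ab ∈ A' ×ˢ B, ∑ ij ∈ R, (if 0 < n ab ij then 1 else 0)
            ≤ ∑ _ab ∈ A' ×ˢ B, 2 * r := Finset.sum_le_sum claimB
          _ = (#A' * #B) * (2 * r) := by
              rw [Finset.sum_const, Finset.card_product, smul_eq_mul]
    _ ≤ (p * #C) * (q * #T) + (#A' * #B) * (2 * r) := by
        refine Nat.add_le_add_right ?_ _
        have hsplit : ∑ ij ∈ R, (#(C.filter (fun x => kC x = ij.1)) *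
            #(T.filter (fun x => kT x = ij.2)))^2 =
            (∑ i ∈ Finset.range r, #(C.filter (fun x => kC x = i))^2) *
            (∑ j ∈ Finset.range r, #(T.filter (fun x => kT x = j))^2) := by
          rw [Finset.sum_mul_sum]
          rw [hR, Finset.sum_product]
          refine Finset.sum_congr rfl (fun i _ => Finset.sum_congr rfl (fun j _ => by ring))
        rw [hsplit]
        have hC2 : ∑ i ∈ Finset.range r, #(C.filter (fun x => kC x = i))^2 ≤ p * #C := by
          calc ∑ i ∈ Finset.range r, #(C.filter (fun x => kC x = i))^2
              ≤ ∑ i ∈ Finset.range r, p * #(C.filter (fun x => kC x = i)) := by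
                refine Finset.sum_le_sum (fun i _ => ?_)
                rw [sq]
                exact Nat.mul_le_mul_right _ (card_block_le hp i)
            _ = p * #C := by rw [← Finset.mul_sum, sum_card_block hp hpc]
        have hT2 : ∑ j ∈ Finset.range r, #(T.filter (fun x => kT x = j))^2 ≤ q * #T := by
          calc ∑ j ∈ Finset.range r, #(T.filter (fun x => kT x = j))^2
              ≤ ∑ j ∈ Finset.range r, q * #(T.filter (fun x => kT x = j)) := by
                refine Finset.sum_le_sum (fun j _ => ?_)
                rw [sq]
                exact Nat.mul_le_mul_right _ (card_block_le hq j)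
            _ = q * #T := by rw [← Finset.mul_sum, sum_card_block hq hqt]
        exact Nat.mul_le_mul hC2 hT2

lemma exists_ne_zero (A : Finset ℝ) (hA : A.Nonempty) (hA0 : A ≠ {0}) : ∃ x ∈ A, x ≠ 0 := by
  by_contra h
  push_neg at h
  apply hA0
  apply Finset.Subset.antisymm
  · intro x hx; simp [h x hx]
  · intro x hx
    simp only [Finset.mem_singleton] at hx
    obtain ⟨y, hy⟩ := hA
    have := h y hy
    subst this; subst hx; exact hy

lemma nat_lt_div_succ_mul (a r : ℕ) (hr : 0 < r) : a ≤ (a / r + 1) * r := by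
  have e1 := Nat.div_add_mod a r
  have e2 := Nat.mod_lt a hr
  nlinarith [Nat.div_mul_le_self a r]

section NumericLemmas

variable {a a' b c t s ρ pp qq rr : ℝ}

lemma L0 (haa' : a ≤ 2 * a') (hbc : 0 ≤ b * c) (hcon : 262144 * (t*t) < a * b * c) :
    131072 * (t*t) < a' * b * c := by
  nlinarith [mul_le_mul_of_nonneg_right haa' hbc]

lemma L3 (hs0 : 0 < s) (hs2 : s * s = a' * b * c) (ht0 : 0 ≤ t)
    (hcon : 131072 * (t*t) < a' * b * c) : 362 * t < s := by
  nlinarith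

lemma L4 (hs0 : 0 < s) (hs2 : s * s = a' * b * c) (hc0 : 0 < c)
    (hcase : 64 * c < a' * b) : 8 * c < s := by
  nlinarith [mul_lt_mul_of_pos_right hcase hc0]

lemma L1 (hρs : ρ * s = 8 * c * t) (hs0 : 0 < s) (h8t : 8 * t ≤ s) (hc0 : 0 ≤ c) :
    ρ ≤ c := by
  have hh : ρ * s ≤ c * s := by nlinarith
  exact le_of_mul_le_mul_right hh hs0

lemma L2 (hρs : ρ * s = 8 * c * t) (hs0 : 0 < s) (h8c : 8 * c < s) (ht0 : 0 < t) :
    ρ < t := by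
  have hh : ρ * s < t * s := by nlinarith
  exact lt_of_mul_lt_mul_right hh (le_of_lt hs0)

lemma L5 (hcast : pp ≤ c / rr + 1) (hrr : 0 < rr) (hrc : rr ≤ c) : pp * rr ≤ 2 * c := by
  have h2 : pp * rr ≤ (c / rr + 1) * rr := by nlinarith
  calc pp * rr ≤ (c / rr + 1) * rr := h2
    _ = c + rr := by rw [add_mul, one_mul, div_mul_cancel₀ _ (ne_of_gt hrr)]
    _ ≤ 2 * c := by linarith

lemma L6 (haa' : a ≤ 2 * a') (hcase : a' * b ≤ 64 * c) (hct : c ≤ t) (hb0 : 0 ≤ b)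
    (ht0 : 0 ≤ t) : a * b ≤ 512 * t := by
  nlinarith

set_option maxHeartbeats 1600000 in
lemma endgame (h1a' : 1 ≤ a') (h1b : 1 ≤ b) (h1c : 1 ≤ c) (h1t : 1 ≤ t)
    (ha't : a' ≤ t) (hbt : b ≤ t)
    (hs0 : 0 < s) (hs2 : s * s = a' * b * c) (hts : 362 * t < s)
    (hρs : ρ * s = 8 * c * t) (hρpos : 0 < ρ)
    (hpp0 : 0 ≤ pp) (hqq0 : 0 ≤ qq)
    (hrρ : ρ ≤ rr) (hrρ1 : rr ≤ ρ + 1)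
    (hpr : pp * rr ≤ 2 * c) (hqr : qq * rr ≤ 2 * t)
    (hkey : a' * b * c ≤ (pp * c) * (qq * t) + (a' * b) * (2 * rr)) : False := by
  have hrr0 : 0 < rr := lt_of_lt_of_le hρpos hrρ
  have hpq0 : (0:ℝ) ≤ pp * qq := mul_nonneg hpp0 hqq0
  have hcell0 : (pp * qq) * (ρ * ρ) ≤ 4 * c * t := by
    have h1 : (pp * rr) * (qq * rr) ≤ (2 * c) * (2 * t) :=
      mul_le_mul hpr hqr (by positivity) (by linarith)
    have h2 : ρ * ρ ≤ rr * rr := mul_le_mul hrρ hrρ (le_of_lt hρpos) (by linarith)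
    nlinarith [mul_le_mul_of_nonneg_left h2 hpq0]
  have hss : s * s * (ρ * ρ) = 64 * (c * c) * (t * t) := by
    linear_combination (ρ * s + 8 * c * t) * hρs
  have hcell : 16 * ((pp * c) * (qq * t)) ≤ s * s := by
    have hstep : (16 * (c * t)) * ((pp * qq) * (ρ * ρ)) ≤ (16 * (c * t)) * (4 * c * t) :=
      mul_le_mul_of_nonneg_left hcell0 (by positivity)
    nlinarith [hstep, hss, mul_pos hρpos hρpos]
  have hρab : ρ * (a' * b) = 8 * t * s := by
    have hcancel : s * (ρ * (a' * b)) = s * (8 * t * s) := by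
      linear_combination (a' * b) * hρs - 8 * t * hs2
    exact mul_left_cancel₀ (ne_of_gt hs0) hcancel
  have habt : a' * b ≤ t * t := mul_le_mul ha't hbt (by linarith) (by linarith)
  have h2r : (a' * b) * (2 * rr) ≤ 2 * (ρ * (a' * b)) + 2 * (a' * b) := by
    nlinarith [mul_le_mul_of_nonneg_left hrρ1 (show (0:ℝ) ≤ a' * b by positivity)]
  have hfin : a' * b * c ≤ s * s / 16 + 16 * (t * s) + 2 * (t * t) := by
    rw [hρab] at h2r
    linarith [hkey, hcell, h2r, habt]
  have hA1 : 362 * (t * s) < s * s := by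
    nlinarith [mul_lt_mul_of_pos_right hts hs0]
  have hA3 : 362 * (t * t) < t * s := by
    nlinarith [mul_lt_mul_of_pos_right hts (show (0:ℝ) < t by linarith)]
  nlinarith [hfin, hs2, hA1, hA3, mul_pos hs0 hs0]

end NumericLemmas

end STaux

set_option maxHeartbeats 1000000 in
open STaux in
theorem stmt14 :
    ∃ c > (0:ℝ),
      ∀ A B C : Finset ℝ, A.Nonempty → A ≠ {0} →
        (B + C).Nonempty → B + C ≠ {0} →
        c * min (((A.card : ℝ) * (B.card : ℝ) * (C.card : ℝ)) ^ ((1:ℝ)/2))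
            ((A.card : ℝ) * (B.card : ℝ)) ≤
          ((A * (B + C)).card : ℝ) := by
  classical
  refine ⟨1/512, by norm_num, ?_⟩
  intro A B C hA hAne hS hSne
  obtain ⟨a₀, ha₀A, ha₀⟩ : ∃ x ∈ A, x ≠ 0 := exists_ne_zero A hA hAne
  obtain ⟨s₀, hs₀S, hs₀⟩ : ∃ x ∈ B + C, x ≠ 0 := exists_ne_zero _ hS hSne
  obtain ⟨b₀, hb₀, c₀, hc₀, _⟩ := Finset.mem_add.1 hs₀S
  have hB : B.Nonempty := ⟨b₀, hb₀⟩
  have hC : C.Nonempty := ⟨c₀, hc₀⟩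
  set T := A * (B + C) with hTdef
  have hSt : #(B + C) ≤ #T := by
    calc #(B + C) = #((B + C).image (fun x => a₀ * x)) :=
          (Finset.card_image_of_injective _ (mul_right_injective₀ ha₀)).symm
      _ ≤ #T := Finset.card_le_card (by
          intro x hx
          obtain ⟨s, hs, rfl⟩ := Finset.mem_image.1 hx
          exact Finset.mul_mem_mul ha₀A hs)
  have hAt : #A ≤ #T := by
    calc #A = #(A.image (fun x => x * s₀)) :=
          (Finset.card_image_of_injective _ (mul_left_injective₀ hs₀)).symm
      _ ≤ #T := Finset.card_le_card (by
          intro x hx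
          obtain ⟨y, hy, rfl⟩ := Finset.mem_image.1 hx
          exact Finset.mul_mem_mul hy hs₀S)
  have hbt : #B ≤ #T := le_trans (Finset.card_le_card_add_right hC) hSt
  have hct : #C ≤ #T := le_trans (Finset.card_le_card_add_left hB) hSt
  set A' := A.erase 0 with hA'def
  have hA'0 : ∀ α ∈ A', α ≠ 0 := fun α hα => (Finset.mem_erase.1 hα).1
  have hA'sub : A' ⊆ A := Finset.erase_subset _ _
  have ha₀A' : a₀ ∈ A' := Finset.mem_erase.2 ⟨ha₀, ha₀A⟩
  have hTmem : ∀ α ∈ A', ∀ β ∈ B, ∀ γ ∈ C, α * (β + γ) ∈ T :=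
    fun α hα β hβ γ hγ => Finset.mul_mem_mul (hA'sub hα) (Finset.add_mem_add hβ hγ)
  have hAA' : #A ≤ #A' + 1 := by
    calc #A ≤ #(insert (0:ℝ) A') := Finset.card_le_card (fun x hx => by
          rcases eq_or_ne x 0 with rfl | h
          · exact Finset.mem_insert_self _ _
          · exact Finset.mem_insert_of_mem (Finset.mem_erase.2 ⟨h, hx⟩))
      _ ≤ #A' + 1 := Finset.card_insert_le _ _
  have hA't : #A' ≤ #T := le_trans (Finset.card_le_card hA'sub) hAt
  have h1a' : (1:ℝ) ≤ (#A' : ℝ) := by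
    have h : 0 < #A' := Finset.card_pos.2 ⟨a₀, ha₀A'⟩
    exact_mod_cast h
  have h1b : (1:ℝ) ≤ (#B : ℝ) := by
    have h : 0 < #B := Finset.card_pos.2 hB
    exact_mod_cast h
  have h1c : (1:ℝ) ≤ (#C : ℝ) := by
    have h : 0 < #C := Finset.card_pos.2 hC
    exact_mod_cast h
  have h1t : (1:ℝ) ≤ (#T : ℝ) := by
    have h : 0 < #T := lt_of_lt_of_le (Finset.card_pos.2 ⟨a₀, ha₀A⟩) hAt
    exact_mod_cast h
  have hbtR : (#B:ℝ) ≤ (#T:ℝ) := by exact_mod_cast hbt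
  have hctR : (#C:ℝ) ≤ (#T:ℝ) := by exact_mod_cast hct
  have ha'tR : (#A':ℝ) ≤ (#T:ℝ) := by exact_mod_cast hA't
  have haa' : (#A:ℝ) ≤ 2 * (#A':ℝ) := by
    have h : (#A:ℝ) ≤ (#A':ℝ) + 1 := by exact_mod_cast hAA'
    linarith
  suffices h : min (Real.sqrt ((#A:ℝ) * (#B:ℝ) * (#C:ℝ))) ((#A:ℝ) * (#B:ℝ)) ≤ 512 * (#T:ℝ) by
    rw [Real.sqrt_eq_rpow] at h
    linarith
  rcases le_or_gt ((#A':ℝ) * (#B:ℝ)) (64 * (#C:ℝ)) with hcase | hcase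
  · refine le_trans (min_le_right _ _) ?_
    exact L6 haa' hcase hctR (by linarith) (by linarith)
  · refine le_trans (min_le_left _ _) ?_
    have habc : (#A:ℝ) * (#B:ℝ) * (#C:ℝ) ≤ 262144 * ((#T:ℝ) * (#T:ℝ)) := by
      by_contra hcon
      push_neg at hcon
      have hcon' : 131072 * ((#T:ℝ) * (#T:ℝ)) < (#A':ℝ) * (#B:ℝ) * (#C:ℝ) :=
        L0 haa' (by positivity) hcon
      have hsprodpos : (0:ℝ) < (#A':ℝ) * (#B:ℝ) * (#C:ℝ) :=
        mul_pos (mul_pos (lt_of_lt_of_le zero_lt_one h1a') (lt_of_lt_of_le zero_lt_one h1b))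
          (lt_of_lt_of_le zero_lt_one h1c)
      set s := Real.sqrt ((#A':ℝ) * (#B:ℝ) * (#C:ℝ)) with hsdef
      have hs0 : 0 < s := Real.sqrt_pos.2 hsprodpos
      have hs2 : s * s = (#A':ℝ) * (#B:ℝ) * (#C:ℝ) := Real.mul_self_sqrt (le_of_lt hsprodpos)
      have hts : 362 * (#T:ℝ) < s := L3 hs0 hs2 (by linarith) hcon'
      have h8c : 8 * (#C:ℝ) < s := L4 hs0 hs2 (by linarith) hcase
      set ρ : ℝ := 8 * (#C:ℝ) * (#T:ℝ) / s with hρdef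
      have hρs : ρ * s = 8 * (#C:ℝ) * (#T:ℝ) := div_mul_cancel₀ _ (ne_of_gt hs0)
      have hρpos : 0 < ρ := by
        rw [hρdef]
        have h1 : (0:ℝ) < 8 * (#C:ℝ) * (#T:ℝ) := by nlinarith
        exact div_pos h1 hs0
      have hρc : ρ ≤ (#C:ℝ) := L1 hρs hs0 (by linarith) (by linarith)
      have hρt : ρ < (#T:ℝ) := L2 hρs hs0 h8c (by linarith)
      set r : ℕ := ⌈ρ⌉₊ with hrdef
      have hr1 : 1 ≤ r := Nat.one_le_ceil_iff.2 hρpos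
      have hr0 : 0 < r := hr1
      have hrρ : ρ ≤ (r:ℝ) := Nat.le_ceil ρ
      have hrρ1 : (r:ℝ) ≤ ρ + 1 := le_of_lt (Nat.ceil_lt_add_one (le_of_lt hρpos))
      have hrc' : r ≤ #C := Nat.ceil_le.2 (by linarith)
      have hrt' : r ≤ #T := Nat.ceil_le.2 (by linarith)
      have hrcast : (r:ℝ) ≤ (#C:ℝ) := by exact_mod_cast hrc'
      have hrtcast : (r:ℝ) ≤ (#T:ℝ) := by exact_mod_cast hrt'
      have hrpos : (0:ℝ) < (r:ℝ) := by exact_mod_cast hr0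
      set p : ℕ := #C / r + 1 with hpdef
      set q : ℕ := #T / r + 1 with hqdef
      have hp : 0 < p := Nat.succ_pos _
      have hq : 0 < q := Nat.succ_pos _
      have hpc : #C ≤ p * r := nat_lt_div_succ_mul _ _ hr0
      have hqt : #T ≤ q * r := nat_lt_div_succ_mul _ _ hr0
      have hkey := key A' B C T hA'0 hTmem r p q hp hq hpc hqt
      have hkeyR : (#A':ℝ) * (#B:ℝ) * (#C:ℝ) ≤
          ((p:ℝ) * (#C:ℝ)) * ((q:ℝ) * (#T:ℝ)) + ((#A':ℝ) * (#B:ℝ)) * (2 * (r:ℝ)) := by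
        exact_mod_cast hkey
      have hpcast : (p:ℝ) ≤ (#C:ℝ) / (r:ℝ) + 1 := by
        rw [hpdef]
        push_cast
        linarith [Nat.cast_div_le (α := ℝ) (m := #C) (n := r)]
      have hqcast : (q:ℝ) ≤ (#T:ℝ) / (r:ℝ) + 1 := by
        rw [hqdef]
        push_cast
        linarith [Nat.cast_div_le (α := ℝ) (m := #T) (n := r)]
      have hpr : (p:ℝ) * (r:ℝ) ≤ 2 * (#C:ℝ) := L5 hpcast hrpos hrcast
      have hqr : (q:ℝ) * (r:ℝ) ≤ 2 * (#T:ℝ) := L5 hqcast hrpos hrtcast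
      exact endgame h1a' h1b h1c h1t ha'tR hbtR hs0 hs2 hts hρs hρpos
        (by positivity) (by positivity) hrρ hrρ1 hpr hqr hkeyR
    have hsq : Real.sqrt ((#A:ℝ) * (#B:ℝ) * (#C:ℝ)) ≤
        Real.sqrt (262144 * ((#T:ℝ) * (#T:ℝ))) := Real.sqrt_le_sqrt habc
    rw [show (262144:ℝ) * ((#T:ℝ) * (#T:ℝ)) = (512 * (#T:ℝ))^2 by ring,
      Real.sqrt_sq (by positivity)] at hsq
    linarith
end

section
/- Let N be a positive integer divisible by 3 and let A = {2ⁿ : n ∈ {1, 2, …, N}} ⊂ ℝ. Then the multiplicative energy of the sum set satisfies E*(A+A) ≥ (N/3)⁵. -/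
open Finset Pointwise

/-- The multiplicative energy of a finite set `X` of real numbers: the number of
quadruples `(a, b, c, d) ∈ X⁴` with `a * b = c * d`. -/
noncomputable def mulEnergy (X : Finset ℝ) : ℕ :=
  ((X ×ˢ X ×ˢ X ×ˢ X).filter fun t => t.1 * t.2.1 = t.2.2.1 * t.2.2.2).card

lemma aux_lt (a b c d : ℕ) (hab : a < b) (hcd : c < d) (hac : a < c)
    (h : 2^a + 2^b = 2^c + 2^d) : False := by
  have h1 : 2^(a+1) ∣ 2^b := pow_dvd_pow 2 hab
  have h2 : 2^(a+1) ∣ 2^c := pow_dvd_pow 2 hac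
  have h3 : 2^(a+1) ∣ 2^d := pow_dvd_pow 2 (by omega)
  have h4 : 2^(a+1) ∣ 2^a := by
    have he : (2:ℕ)^a = (2^c + 2^d) - 2^b := by omega
    rw [he]
    exact Nat.dvd_sub (Nat.dvd_add h2 h3) h1
  have h5 := Nat.le_of_dvd (pow_pos (by norm_num) a) h4
  have h6 : (2:ℕ)^a < 2^(a+1) := Nat.pow_lt_pow_right (by norm_num) (by omega)
  omega

lemma key_nat (a b c d : ℕ) (hab : a < b) (hcd : c < d)
    (h : 2^a + 2^b = 2^c + 2^d) : a = c ∧ b = d := by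
  have hac : a = c := by
    rcases lt_trichotomy a c with h' | h' | h'
    · exact (aux_lt a b c d hab hcd h' h).elim
    · exact h'
    · exact (aux_lt c d a b hcd hab h' h.symm).elim
  subst hac
  have hb : (2:ℕ)^b = 2^d := by omega
  exact ⟨rfl, Nat.pow_right_injective (by norm_num) hb⟩

lemma key_real (a b c d : ℕ) (hab : a < b) (hcd : c < d)
    (h : (2:ℝ)^a + 2^b = 2^c + 2^d) : a = c ∧ b = d := by
  have h' : ((2^a + 2^b : ℕ) : ℝ) = ((2^c + 2^d : ℕ) : ℝ) := by push_cast; exact h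
  exact key_nat a b c d hab hcd (by exact_mod_cast h')

theorem stmt17 (N : ℕ) (hN : 0 < N) (h3 : 3 ∣ N)
    (A : Finset ℝ) (hA : A = (Finset.Icc 1 N).image fun n => (2:ℝ) ^ n) :
    ((N : ℝ) / 3) ^ 5 ≤ (mulEnergy (A + A) : ℝ) := by
  obtain ⟨M, rfl⟩ := h3
  have hM : 0 < M := by omega
  -- membership of sums of powers of 2 in A + A
  have hmem : ∀ a b : ℕ, 1 ≤ a → a ≤ 3*M → 1 ≤ b → b ≤ 3*M →
      (2:ℝ)^a + 2^b ∈ A + A := by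
    intro a b h1 h2 h3' h4
    subst hA
    exact Finset.add_mem_add
      (Finset.mem_image_of_mem _ (Finset.mem_Icc.mpr ⟨h1, h2⟩))
      (Finset.mem_image_of_mem _ (Finset.mem_Icc.mpr ⟨h3', h4⟩))
  classical
  set s : Finset (ℕ × ℕ × ℕ × ℕ × ℕ) :=
    (Icc 1 M) ×ˢ (Icc (M+1) (2*M)) ×ˢ (Icc (M+1) (2*M)) ×ˢ (Icc (2*M+1) (3*M)) ×ˢ (range M)
    with hs
  set f : ℕ × ℕ × ℕ × ℕ × ℕ → ℝ × ℝ × ℝ × ℝ := fun p =>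
    ((2:ℝ)^p.1 + 2^p.2.1, (2:ℝ)^p.2.2.1 + 2^p.2.2.2.1,
     (2:ℝ)^(p.1 + p.2.2.2.2) + 2^(p.2.1 + p.2.2.2.2),
     (2:ℝ)^(p.2.2.1 - p.2.2.2.2) + 2^(p.2.2.2.1 - p.2.2.2.2)) with hf
  set X := A + A with hX
  have hmaps : ∀ p ∈ s, f p ∈
      (X ×ˢ X ×ˢ X ×ˢ X).filter fun t => t.1 * t.2.1 = t.2.2.1 * t.2.2.2 := by
    rintro ⟨i, j, k, l, t⟩ hp
    simp only [hs, Finset.mem_product, Finset.mem_Icc, Finset.mem_range] at hp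
    obtain ⟨⟨hi1, hi2⟩, ⟨hj1, hj2⟩, ⟨hk1, hk2⟩, ⟨hl1, hl2⟩, ht⟩ := hp
    simp only [Finset.mem_filter, Finset.mem_product, hf]
    refine ⟨⟨?_, ?_, ?_, ?_⟩, ?_⟩
    · exact hmem i j (by omega) (by omega) (by omega) (by omega)
    · exact hmem k l (by omega) (by omega) (by omega) (by omega)
    · exact hmem (i+t) (j+t) (by omega) (by omega) (by omega) (by omega)
    · exact hmem (k-t) (l-t) (by omega) (by omega) (by omega) (by omega)
    · -- product equality
      have e1 : (2:ℝ)^(i+t) = 2^i * 2^t := pow_add 2 i t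
      have e2 : (2:ℝ)^(j+t) = 2^j * 2^t := pow_add 2 j t
      have e3 : (2:ℝ)^(k-t) * 2^t = 2^k := by
        rw [← pow_add]; congr 1; omega
      have e4 : (2:ℝ)^(l-t) * 2^t = 2^l := by
        rw [← pow_add]; congr 1; omega
      rw [e1, e2]
      linear_combination (-((2:ℝ)^i + 2^j)) * e3 + (-((2:ℝ)^i + 2^j)) * e4
  have hinj : Set.InjOn f s := by
    rintro ⟨i, j, k, l, t⟩ hp ⟨i', j', k', l', t'⟩ hq hfeq
    simp only [hs, Finset.coe_product, Set.mem_prod, Finset.mem_coe,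
      Finset.mem_Icc, Finset.mem_range] at hp hq
    obtain ⟨⟨hi1, hi2⟩, ⟨hj1, hj2⟩, ⟨hk1, hk2⟩, ⟨hl1, hl2⟩, ht⟩ := hp
    obtain ⟨⟨hi1', hi2'⟩, ⟨hj1', hj2'⟩, ⟨hk1', hk2'⟩, ⟨hl1', hl2'⟩, ht'⟩ := hq
    simp only [hf, Prod.mk.injEq] at hfeq
    obtain ⟨q1, q2, q3, q4⟩ := hfeq
    obtain ⟨rfl, rfl⟩ := key_real i j i' j' (by omega) (by omega) q1
    obtain ⟨rfl, rfl⟩ := key_real k l k' l' (by omega) (by omega) q2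
    obtain ⟨h5, h6⟩ := key_real (i+t) (j+t) (i+t') (j+t') (by omega) (by omega) q3
    have : t = t' := by omega
    subst this
    rfl
  have hcard := Finset.card_le_card_of_injOn f hmaps hinj
  have c1 : (Icc 1 M).card = M := by rw [Nat.card_Icc]; omega
  have c2 : (Icc (M+1) (2*M)).card = M := by rw [Nat.card_Icc]; omega
  have c3 : (Icc (2*M+1) (3*M)).card = M := by rw [Nat.card_Icc]; omega
  have hscard : s.card = M^5 := by
    simp only [hs, Finset.card_product, c1, c2, c3, Finset.card_range]
    ring
  rw [hscard] at hcard
  have hle : M^5 ≤ _root_.mulEnergy X := hcard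
  have hcast : ((3*M : ℕ) : ℝ) / 3 = (M : ℝ) := by push_cast; ring
  rw [hcast]
  calc (M:ℝ)^5 = ((M^5 : ℕ) : ℝ) := by push_cast; ring
    _ ≤ _ := by exact_mod_cast hle
end
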